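/- arXiv:2212.13999 — 10 statements merged into one kernel-verified Lean document; each statement's English description precedes it below -/
import Mathlib

section
/- Let X be a measurable space, K a kernel on X, and w : X → [0,∞] a Borel function such that K satisfies the domination principle relative to w. Let u, v, f : X → ℝ be Borel functions such that K|f| < ∞ pointwise, u + Kf = v, the set {u < 0} is contained in {f ≤ 0}, and w ≥ v pointwise. Then v ≤ u + w on X. -/
open MeasureTheory ProbabilityTheory
open scoped ENNReal

/-- `K` satisfies the domination principle relative to `w`: if `Kg ≤ Kh + w` holds at
every point of `{g > 0}` (for Borel `g, h : X → [0,∞]`), then it holds everywhere. -/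
def DomPrinciple {X : Type*} [MeasurableSpace X] (K : Kernel X X) (w : X → ℝ≥0∞) : Prop :=
  ∀ g h : X → ℝ≥0∞, Measurable g → Measurable h →
    (∀ x, 0 < g x → ∫⁻ y, g y ∂(K x) ≤ (∫⁻ y, h y ∂(K x)) + w x) →
    ∀ x, ∫⁻ y, g y ∂(K x) ≤ (∫⁻ y, h y ∂(K x)) + w x

theorem stmt_1 {X : Type*} [MeasurableSpace X] (K : Kernel X X)
    (w : X → ℝ≥0∞) (hw : Measurable w) (hdom : DomPrinciple K w)
    (u v f : X → ℝ) (hu : Measurable u) (hv : Measurable v) (hf : Measurable f)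
    (hfin : ∀ x, ∫⁻ y, ENNReal.ofReal |f y| ∂(K x) < ⊤)
    (heq : ∀ x, u x + ∫ y, f y ∂(K x) = v x)
    (hsub : {x | u x < 0} ⊆ {x | f x ≤ 0})
    (hwv : ∀ x, ENNReal.ofReal (v x) ≤ w x) :
    ∀ x, ENNReal.ofReal (v x - u x) ≤ w x := by
  set g : X → ℝ≥0∞ := fun y => ENNReal.ofReal (f y) with hg
  set h : X → ℝ≥0∞ := fun y => ENNReal.ofReal (-f y) with hh
  have hgm : Measurable g := ENNReal.measurable_ofReal.comp hf
  have hhm : Measurable h := ENNReal.measurable_ofReal.comp hf.neg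
  have hgfin : ∀ x, ∫⁻ y, g y ∂(K x) < ⊤ := fun x =>
    lt_of_le_of_lt (lintegral_mono fun y => ENNReal.ofReal_le_ofReal (le_abs_self _)) (hfin x)
  have hhfin : ∀ x, ∫⁻ y, h y ∂(K x) < ⊤ := fun x =>
    lt_of_le_of_lt (lintegral_mono fun y => ENNReal.ofReal_le_ofReal (neg_le_abs _)) (hfin x)
  have hint : ∀ x, Integrable f (K x) := fun x => by
    refine ⟨hf.aestronglyMeasurable, ?_⟩
    rw [HasFiniteIntegral]
    have : ∀ y, ‖f y‖ₑ = ENNReal.ofReal |f y| := fun y => by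
      rw [Real.enorm_eq_ofReal_abs]
    simpa [this] using hfin x
  have hrepr : ∀ x, ∫ y, f y ∂(K x) = (∫⁻ y, g y ∂(K x)).toReal - (∫⁻ y, h y ∂(K x)).toReal :=
    fun x => integral_eq_lintegral_pos_part_sub_lintegral_neg_part (hint x)
  -- key: lintegral of g ≤ lintegral of h + ofReal (∫ f)
  have hkey : ∀ x, ∫⁻ y, g y ∂(K x) ≤ (∫⁻ y, h y ∂(K x)) + ENNReal.ofReal (∫ y, f y ∂(K x)) := by
    intro x
    rcases le_or_gt (∫ y, f y ∂(K x)) 0 with hle | hlt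
    · have : (∫⁻ y, g y ∂(K x)).toReal ≤ (∫⁻ y, h y ∂(K x)).toReal := by
        have := hrepr x; linarith
      have := (ENNReal.toReal_le_toReal (hgfin x).ne (hhfin x).ne).mp this
      exact this.trans le_self_add
    · have hA : (∫⁻ y, g y ∂(K x)).toReal = (∫⁻ y, h y ∂(K x)).toReal + ∫ y, f y ∂(K x) := by
        have := hrepr x; linarith
      calc ∫⁻ y, g y ∂(K x) = ENNReal.ofReal ((∫⁻ y, g y ∂(K x)).toReal) :=
            (ENNReal.ofReal_toReal (hgfin x).ne).symm
        _ = ENNReal.ofReal ((∫⁻ y, h y ∂(K x)).toReal) + ENNReal.ofReal (∫ y, f y ∂(K x)) := by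
            rw [hA, ENNReal.ofReal_add ENNReal.toReal_nonneg hlt.le]
        _ = (∫⁻ y, h y ∂(K x)) + ENNReal.ofReal (∫ y, f y ∂(K x)) := by
            rw [ENNReal.ofReal_toReal (hhfin x).ne]
        _ ≤ (∫⁻ y, h y ∂(K x)) + ENNReal.ofReal (∫ y, f y ∂(K x)) := le_rfl
  have hpt : ∀ x, 0 < g x → ∫⁻ y, g y ∂(K x) ≤ (∫⁻ y, h y ∂(K x)) + w x := by
    intro x hx
    have hfx : 0 < f x := by
      simpa [hg, ENNReal.ofReal_pos] using hx
    have hux : 0 ≤ u x := by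
      by_contra hneg
      exact absurd (hsub (by simpa using lt_of_not_ge hneg)) (not_le.mpr hfx)
    have : ∫ y, f y ∂(K x) ≤ v x := by have := heq x; linarith
    exact (hkey x).trans (add_le_add le_rfl ((ENNReal.ofReal_le_ofReal this).trans (hwv x)))
  have hall := hdom g h hgm hhm hpt
  intro x
  have hvu : v x - u x = ∫ y, f y ∂(K x) := by have := heq x; linarith
  rw [hvu]
  -- now from hall x deduce ofReal (∫ f) ≤ w x
  have h1 : ENNReal.ofReal (∫ y, f y ∂(K x)) =
      (∫⁻ y, g y ∂(K x)) - (∫⁻ y, h y ∂(K x)) := by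
    rw [hrepr x, ENNReal.ofReal_sub _ ENNReal.toReal_nonneg,
      ENNReal.ofReal_toReal (hgfin x).ne, ENNReal.ofReal_toReal (hhfin x).ne]
  rw [h1]
  exact tsub_le_iff_left.mpr ((hall x).trans (by rw [add_comm]))
end

section
/- Let X be a measurable space and K a kernel on X. Let φ : X × ℝ → ℝ be Borel measurable with φ(x,0) = 0 for all x and sign-preserving, i.e. t·φ(x,t) ≥ 0 for all x ∈ X and t ∈ ℝ. Let u, v : X → ℝ be Borel with K|φ(·,u)| < ∞ pointwise and u + Kφ(·,u) = v. Suppose w₁, w₂ : X → [0,∞] are Borel functions with w₁ ≥ v⁺ := max(v,0) and w₂ ≥ v⁻ := max(−v,0), and K satisfies the domination principle relative to w₁ and relative to w₂. Then |u| ≤ w₁ + w₂ on X. -/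
open MeasureTheory ProbabilityTheory
open scoped ENNReal

theorem stmt_2 {X : Type*} [MeasurableSpace X] (K : Kernel X X)
    (φ : X → ℝ → ℝ) (hφm : Measurable (Function.uncurry φ))
    (hφ0 : ∀ x, φ x 0 = 0) (hsign : ∀ x t, 0 ≤ t * φ x t)
    (u v : X → ℝ) (hu : Measurable u) (hv : Measurable v)
    (hfin : ∀ x, ∫⁻ y, ENNReal.ofReal |φ y (u y)| ∂(K x) < ⊤)
    (heq : ∀ x, u x + ∫ y, φ y (u y) ∂(K x) = v x)
    (w₁ w₂ : X → ℝ≥0∞) (hw₁ : Measurable w₁) (hw₂ : Measurable w₂)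
    (hvw₁ : ∀ x, ENNReal.ofReal (max (v x) 0) ≤ w₁ x)
    (hvw₂ : ∀ x, ENNReal.ofReal (max (-v x) 0) ≤ w₂ x)
    (hdom₁ : DomPrinciple K w₁) (hdom₂ : DomPrinciple K w₂) :
    ∀ x, ENNReal.ofReal |u x| ≤ w₁ x + w₂ x := by
  classical
  set f : X → ℝ := fun y => φ y (u y) with hf
  have hfm : Measurable f := hφm.comp (measurable_id.prodMk hu)
  set g : X → ℝ≥0∞ := fun y => ENNReal.ofReal (f y) with hgdef
  set h : X → ℝ≥0∞ := fun y => ENNReal.ofReal (-f y) with hhdef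
  have hgm : Measurable g := hfm.ennreal_ofReal
  have hhm : Measurable h := hfm.neg.ennreal_ofReal
  have hAfin : ∀ x, ∫⁻ y, g y ∂(K x) < ⊤ := fun x =>
    lt_of_le_of_lt (lintegral_mono fun y => ENNReal.ofReal_le_ofReal (le_abs_self _)) (hfin x)
  have hBfin : ∀ x, ∫⁻ y, h y ∂(K x) < ⊤ := fun x =>
    lt_of_le_of_lt (lintegral_mono fun y => ENNReal.ofReal_le_ofReal (neg_le_abs _)) (hfin x)
  have hint : ∀ x, Integrable f (K x) := by
    intro x
    refine ⟨hfm.aestronglyMeasurable, ?_⟩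
    have : ∀ y, ‖f y‖ₑ = ENNReal.ofReal |f y| := fun y =>
      Real.enorm_eq_ofReal_abs _
    simpa [MeasureTheory.HasFiniteIntegral, this] using hfin x
  have hIeq : ∀ x, ∫ y, f y ∂(K x) = (∫⁻ y, g y ∂(K x)).toReal - (∫⁻ y, h y ∂(K x)).toReal :=
    fun x => integral_eq_lintegral_pos_part_sub_lintegral_neg_part (hint x)
  have hsignp : ∀ y, 0 < f y → 0 < u y := by
    intro y hy
    by_contra hc
    push_neg at hc
    rcases lt_or_eq_of_le hc with hlt | heq0
    · nlinarith [hsign y (u y)]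
    · have : f y = 0 := by simp only [hf]; rw [heq0, hφ0]
      linarith
  have hsignn : ∀ y, f y < 0 → u y < 0 := by
    intro y hy
    by_contra hc
    push_neg at hc
    rcases lt_or_eq_of_le hc with hlt | heq0
    · nlinarith [hsign y (u y)]
    · have : f y = 0 := by simp only [hf]; rw [← heq0, hφ0]
      linarith
  have hIvu : ∀ x, ∫ y, f y ∂(K x) = v x - u x := fun x => by linarith [heq x]
  have step1 : ∀ x, ∫⁻ y, g y ∂(K x) ≤ (∫⁻ y, h y ∂(K x)) + w₁ x := by
    apply hdom₁ g h hgm hhm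
    intro x hx
    have hux : 0 < u x := hsignp x (by simpa [hgdef, ENNReal.ofReal_pos] using hx)
    have hAB : (∫⁻ y, g y ∂(K x)).toReal ≤ (∫⁻ y, h y ∂(K x)).toReal + max (v x) 0 := by
      have h1 := hIeq x
      have h2 := hIvu x
      have h3 := le_max_left (v x) 0
      linarith
    calc ∫⁻ y, g y ∂(K x) = ENNReal.ofReal (∫⁻ y, g y ∂(K x)).toReal :=
          (ENNReal.ofReal_toReal (hAfin x).ne).symm
      _ ≤ ENNReal.ofReal ((∫⁻ y, h y ∂(K x)).toReal + max (v x) 0) :=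
          ENNReal.ofReal_le_ofReal hAB
      _ ≤ ENNReal.ofReal (∫⁻ y, h y ∂(K x)).toReal + ENNReal.ofReal (max (v x) 0) :=
          ENNReal.ofReal_add_le
      _ ≤ (∫⁻ y, h y ∂(K x)) + w₁ x := by
          refine add_le_add ?_ (hvw₁ x)
          rw [ENNReal.ofReal_toReal (hBfin x).ne]
  have step2 : ∀ x, ∫⁻ y, h y ∂(K x) ≤ (∫⁻ y, g y ∂(K x)) + w₂ x := by
    apply hdom₂ h g hhm hgm
    intro x hx
    have hfx : f x < 0 := by
      have : 0 < -f x := by simpa [hhdef, ENNReal.ofReal_pos] using hx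
      linarith
    have hux : u x < 0 := hsignn x hfx
    have hAB : (∫⁻ y, h y ∂(K x)).toReal ≤ (∫⁻ y, g y ∂(K x)).toReal + max (-v x) 0 := by
      have h1 := hIeq x
      have h2 := hIvu x
      have h3 := le_max_left (-v x) 0
      linarith
    calc ∫⁻ y, h y ∂(K x) = ENNReal.ofReal (∫⁻ y, h y ∂(K x)).toReal :=
          (ENNReal.ofReal_toReal (hBfin x).ne).symm
      _ ≤ ENNReal.ofReal ((∫⁻ y, g y ∂(K x)).toReal + max (-v x) 0) :=
          ENNReal.ofReal_le_ofReal hAB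
      _ ≤ ENNReal.ofReal (∫⁻ y, g y ∂(K x)).toReal + ENNReal.ofReal (max (-v x) 0) :=
          ENNReal.ofReal_add_le
      _ ≤ (∫⁻ y, g y ∂(K x)) + w₂ x := by
          refine add_le_add ?_ (hvw₂ x)
          rw [ENNReal.ofReal_toReal (hAfin x).ne]
  intro x
  by_cases hw1 : w₁ x = ⊤
  · simp [hw1]
  by_cases hw2 : w₂ x = ⊤
  · simp [hw2]
  have h1r : (∫⁻ y, g y ∂(K x)).toReal ≤ (∫⁻ y, h y ∂(K x)).toReal + (w₁ x).toReal := by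
    have h1 := step1 x
    have hfin' : (∫⁻ y, h y ∂(K x)) + w₁ x ≠ ⊤ :=
      ENNReal.add_ne_top.mpr ⟨(hBfin x).ne, hw1⟩
    have := ENNReal.toReal_mono hfin' h1
    rwa [ENNReal.toReal_add (hBfin x).ne hw1] at this
  have h2r : (∫⁻ y, h y ∂(K x)).toReal ≤ (∫⁻ y, g y ∂(K x)).toReal + (w₂ x).toReal := by
    have h2 := step2 x
    have hfin' : (∫⁻ y, g y ∂(K x)) + w₂ x ≠ ⊤ :=
      ENNReal.add_ne_top.mpr ⟨(hAfin x).ne, hw2⟩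
    have := ENNReal.toReal_mono hfin' h2
    rwa [ENNReal.toReal_add (hAfin x).ne hw2] at this
  have huval : u x = v x - ((∫⁻ y, g y ∂(K x)).toReal - (∫⁻ y, h y ∂(K x)).toReal) := by
    have h1 := hIeq x
    have h2 := hIvu x
    linarith
  rcases le_total 0 (u x) with hpos | hneg
  · have hle : u x ≤ max (v x) 0 + (w₂ x).toReal := by
      have h3 := le_max_left (v x) 0
      linarith
    calc ENNReal.ofReal |u x| = ENNReal.ofReal (u x) := by rw [abs_of_nonneg hpos]
      _ ≤ ENNReal.ofReal (max (v x) 0 + (w₂ x).toReal) := ENNReal.ofReal_le_ofReal hle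
      _ ≤ ENNReal.ofReal (max (v x) 0) + ENNReal.ofReal (w₂ x).toReal := ENNReal.ofReal_add_le
      _ ≤ w₁ x + w₂ x := by
          refine add_le_add (hvw₁ x) ?_
          rw [ENNReal.ofReal_toReal hw2]
  · have hle : -u x ≤ max (-v x) 0 + (w₁ x).toReal := by
      have h3 := le_max_left (-v x) 0
      linarith
    calc ENNReal.ofReal |u x| = ENNReal.ofReal (-u x) := by rw [abs_of_nonpos hneg]
      _ ≤ ENNReal.ofReal (max (-v x) 0 + (w₁ x).toReal) := ENNReal.ofReal_le_ofReal hle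
      _ ≤ ENNReal.ofReal (max (-v x) 0) + ENNReal.ofReal (w₁ x).toReal := ENNReal.ofReal_add_le
      _ ≤ w₂ x + w₁ x := by
          refine add_le_add (hvw₂ x) ?_
          rw [ENNReal.ofReal_toReal hw1]
      _ = w₁ x + w₂ x := add_comm _ _
end

section
/- Let X be a measurable space and K a kernel on X. Let φ : X × ℝ → ℝ be Borel measurable with φ(x,0) = 0 for all x and sign-preserving, i.e. t·φ(x,t) ≥ 0 for all x ∈ X and t ∈ ℝ. Let u, v : X → ℝ be Borel with K|φ(·,u)| < ∞ pointwise and u + Kφ(·,u) = v. Suppose w′, w″ : X → [0,∞) are Borel functions with v = w′ − w″, and K satisfies the domination principle relative to w′ and relative to w″. Then −w″ ≤ u ≤ w′ on X. In particular, if w″ = 0 (i.e. v = w′ ≥ 0), then 0 ≤ u ≤ v. -/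
open MeasureTheory ProbabilityTheory
open scoped ENNReal

lemma ennreal_aux (a b : ℝ≥0∞) (ha : a ≠ ⊤) (hb : b ≠ ⊤) (c : ℝ) (hc : 0 ≤ c) :
    a ≤ b + ENNReal.ofReal c ↔ a.toReal ≤ b.toReal + c := by
  have hb' : b + ENNReal.ofReal c = ENNReal.ofReal (b.toReal + c) := by
    rw [ENNReal.ofReal_add ENNReal.toReal_nonneg hc, ENNReal.ofReal_toReal hb]
  rw [hb', ENNReal.le_ofReal_iff_toReal_le ha (by positivity)]

theorem stmt_3 {X : Type*} [MeasurableSpace X] (K : Kernel X X)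
    (φ : X → ℝ → ℝ) (hφm : Measurable (Function.uncurry φ))
    (hφ0 : ∀ x, φ x 0 = 0) (hsign : ∀ x t, 0 ≤ t * φ x t)
    (u v : X → ℝ) (hu : Measurable u) (hv : Measurable v)
    (hfin : ∀ x, ∫⁻ y, ENNReal.ofReal |φ y (u y)| ∂(K x) < ⊤)
    (heq : ∀ x, u x + ∫ y, φ y (u y) ∂(K x) = v x)
    (w' w'' : X → ℝ) (hw' : Measurable w') (hw'' : Measurable w'')
    (hw'pos : ∀ x, 0 ≤ w' x) (hw''pos : ∀ x, 0 ≤ w'' x)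
    (hdiff : ∀ x, v x = w' x - w'' x)
    (hdom' : DomPrinciple K fun x => ENNReal.ofReal (w' x))
    (hdom'' : DomPrinciple K fun x => ENNReal.ofReal (w'' x)) :
    (∀ x, -w'' x ≤ u x ∧ u x ≤ w' x) ∧
      ((∀ x, w'' x = 0) → ∀ x, 0 ≤ u x ∧ u x ≤ v x) := by
  set f : X → ℝ := fun y => φ y (u y) with hfdef
  have hf : Measurable f := hφm.comp (measurable_id.prodMk hu)
  have hfi : ∀ x, Integrable f (K x) := by
    intro x
    refine ⟨hf.aestronglyMeasurable, ?_⟩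
    rw [hasFiniteIntegral_iff_norm]
    simpa [Real.norm_eq_abs] using hfin x
  set g : X → ℝ≥0∞ := fun y => ENNReal.ofReal (f y) with hgdef
  set h : X → ℝ≥0∞ := fun y => ENNReal.ofReal (-f y) with hhdef
  have hg : Measurable g := hf.ennreal_ofReal
  have hh : Measurable h := hf.neg.ennreal_ofReal
  have hGfin : ∀ x, ∫⁻ y, g y ∂(K x) ≠ ⊤ := fun x =>
    (lt_of_le_of_lt (lintegral_mono fun y =>
      ENNReal.ofReal_le_ofReal (le_abs_self _)) (hfin x)).ne
  have hHfin : ∀ x, ∫⁻ y, h y ∂(K x) ≠ ⊤ := fun x =>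
    (lt_of_le_of_lt (lintegral_mono fun y =>
      ENNReal.ofReal_le_ofReal (neg_le_abs _)) (hfin x)).ne
  have hint : ∀ x, ∫ y, f y ∂(K x)
      = (∫⁻ y, g y ∂(K x)).toReal - (∫⁻ y, h y ∂(K x)).toReal := fun x =>
    integral_eq_lintegral_pos_part_sub_lintegral_neg_part (hfi x)
  -- sign analysis
  have hpos : ∀ x, 0 < f x → 0 < u x := by
    intro x hx
    rcases lt_trichotomy (u x) 0 with hlt | he | hgt
    · nlinarith [hsign x (u x)]
    · exact absurd hx (by simp [hfdef, he, hφ0 x])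
    · exact hgt
  have hneg : ∀ x, f x < 0 → u x < 0 := by
    intro x hx
    rcases lt_trichotomy (u x) 0 with hlt | he | hgt
    · exact hlt
    · exact absurd hx (by simp [hfdef, he, hφ0 x])
    · nlinarith [hsign x (u x)]
  -- u ≥ -w'' : show Kf ≤ w' everywhere via hdom'
  have key1 : ∀ x, ∫ y, f y ∂(K x) ≤ w' x := by
    intro x
    have := hdom' g h hg hh ?_ x
    · rw [hint x, sub_le_iff_le_add]
      have := (ennreal_aux _ _ (hGfin x) (hHfin x) _ (hw'pos x)).mp this
      linarith
    · intro z hz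
      have hfz : 0 < f z := by
        by_contra hc
        simp [hgdef, ENNReal.ofReal_eq_zero.mpr (not_lt.mp hc)] at hz
      have huz := hpos z hfz
      rw [ennreal_aux _ _ (hGfin z) (hHfin z) _ (hw'pos z)]
      have h1 : ∫ y, f y ∂(K z) = v z - u z := by linarith [heq z]
      have := hint z
      nlinarith [hw''pos z, hdiff z]
  -- u ≤ w' : show Kf ≥ -w'' everywhere via hdom''
  have key2 : ∀ x, -w'' x ≤ ∫ y, f y ∂(K x) := by
    intro x
    have := hdom'' h g hh hg ?_ x
    · rw [hint x]
      have := (ennreal_aux _ _ (hHfin x) (hGfin x) _ (hw''pos x)).mp this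
      linarith
    · intro z hz
      have hfz : f z < 0 := by
        by_contra hc
        simp [hhdef, ENNReal.ofReal_eq_zero.mpr (by linarith [not_lt.mp hc] : -f z ≤ 0)] at hz
      have huz := hneg z hfz
      rw [ennreal_aux _ _ (hHfin z) (hGfin z) _ (hw''pos z)]
      have h1 : ∫ y, f y ∂(K z) = v z - u z := by linarith [heq z]
      have := hint z
      nlinarith [hw'pos z, hdiff z]
  have main : ∀ x, -w'' x ≤ u x ∧ u x ≤ w' x := by
    intro x
    have h1 := key1 x
    have h2 := key2 x
    have h3 := heq x
    have h4 := hdiff x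
    constructor <;> linarith
  refine ⟨main, fun hz x => ?_⟩
  have := main x
  have h4 := hdiff x
  rw [hz x] at *
  constructor <;> linarith [this.1, this.2]
end

section
/- Let X be a measurable space and K a kernel on X. Let φ : X × ℝ → ℝ be Borel measurable with φ(x,0) = 0 and such that t ↦ φ(x,t) is increasing for every x ∈ X. Let u₁, u₂, v₁, v₂ : X → ℝ be Borel with K|φ(·,u_j)| < ∞ pointwise and u_j + Kφ(·,u_j) = v_j for j = 1,2. (a) If w : X → [0,∞] is Borel with w ≥ v₂ − v₁ and K satisfies the domination principle relative to w, then v₂ − v₁ ≤ u₂ − u₁ + w on X. (b) If v₂ − v₁ ≥ 0 and K satisfies the domination principle relative to the function v₂ − v₁, then 0 ≤ u₂ − u₁ ≤ v₂ − v₁ on X. -/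
open MeasureTheory ProbabilityTheory
open scoped ENNReal

theorem stmt_4 {X : Type*} [MeasurableSpace X] (K : Kernel X X)
    (φ : X → ℝ → ℝ) (hφm : Measurable (Function.uncurry φ))
    (hφ0 : ∀ x, φ x 0 = 0) (hφmono : ∀ x, Monotone (φ x))
    (u₁ u₂ v₁ v₂ : X → ℝ)
    (hu₁ : Measurable u₁) (hu₂ : Measurable u₂) (hv₁ : Measurable v₁) (hv₂ : Measurable v₂)
    (hfin₁ : ∀ x, ∫⁻ y, ENNReal.ofReal |φ y (u₁ y)| ∂(K x) < ⊤)
    (hfin₂ : ∀ x, ∫⁻ y, ENNReal.ofReal |φ y (u₂ y)| ∂(K x) < ⊤)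
    (heq₁ : ∀ x, u₁ x + ∫ y, φ y (u₁ y) ∂(K x) = v₁ x)
    (heq₂ : ∀ x, u₂ x + ∫ y, φ y (u₂ y) ∂(K x) = v₂ x) :
    (∀ w : X → ℝ≥0∞, Measurable w → (∀ x, ENNReal.ofReal (v₂ x - v₁ x) ≤ w x) →
      DomPrinciple K w →
      ∀ x, ENNReal.ofReal (v₂ x - v₁ x - (u₂ x - u₁ x)) ≤ w x) ∧
    ((∀ x, 0 ≤ v₂ x - v₁ x) →
      DomPrinciple K (fun x => ENNReal.ofReal (v₂ x - v₁ x)) →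
      ∀ x, 0 ≤ u₂ x - u₁ x ∧ u₂ x - u₁ x ≤ v₂ x - v₁ x) := by
  have hpm : Measurable fun y => φ y (u₂ y) := hφm.comp (measurable_id.prodMk hu₂)
  have hqm : Measurable fun y => φ y (u₁ y) := hφm.comp (measurable_id.prodMk hu₁)
  have hpint : ∀ x, Integrable (fun y => φ y (u₂ y)) (K x) := by
    intro x
    refine ⟨hpm.aestronglyMeasurable, ?_⟩
    rw [hasFiniteIntegral_iff_norm]
    simpa [Real.norm_eq_abs] using hfin₂ x
  have hqint : ∀ x, Integrable (fun y => φ y (u₁ y)) (K x) := by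
    intro x
    refine ⟨hqm.aestronglyMeasurable, ?_⟩
    rw [hasFiniteIntegral_iff_norm]
    simpa [Real.norm_eq_abs] using hfin₁ x
  -- integrable positive parts
  have hfp : ∀ x, Integrable (fun y => max (φ y (u₂ y) - φ y (u₁ y)) 0) (K x) :=
    fun x => ((hpint x).sub (hqint x)).pos_part
  have hfq : ∀ x, Integrable (fun y => max (φ y (u₁ y) - φ y (u₂ y)) 0) (K x) :=
    fun x => ((hqint x).sub (hpint x)).pos_part
  -- the lintegrals of the ENNReal versions
  have hKg : ∀ x, ∫⁻ y, ENNReal.ofReal (φ y (u₂ y) - φ y (u₁ y)) ∂(K x)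
      = ENNReal.ofReal (∫ y, max (φ y (u₂ y) - φ y (u₁ y)) 0 ∂(K x)) := by
    intro x
    rw [ofReal_integral_eq_lintegral_ofReal (hfp x)
      (Filter.Eventually.of_forall fun y => le_max_right _ _)]
    refine lintegral_congr fun y => ?_
    rcases le_total (φ y (u₂ y) - φ y (u₁ y)) 0 with h' | h'
    · simp [ENNReal.ofReal_of_nonpos h', max_eq_right h']
    · simp [max_eq_left h']
  have hKh : ∀ x, ∫⁻ y, ENNReal.ofReal (φ y (u₁ y) - φ y (u₂ y)) ∂(K x)
      = ENNReal.ofReal (∫ y, max (φ y (u₁ y) - φ y (u₂ y)) 0 ∂(K x)) := by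
    intro x
    rw [ofReal_integral_eq_lintegral_ofReal (hfq x)
      (Filter.Eventually.of_forall fun y => le_max_right _ _)]
    refine lintegral_congr fun y => ?_
    rcases le_total (φ y (u₁ y) - φ y (u₂ y)) 0 with h' | h'
    · simp [ENNReal.ofReal_of_nonpos h', max_eq_right h']
    · simp [max_eq_left h']
  -- key identity: difference of positive parts
  have hdiff : ∀ x, (∫ y, max (φ y (u₂ y) - φ y (u₁ y)) 0 ∂(K x))
      - (∫ y, max (φ y (u₁ y) - φ y (u₂ y)) 0 ∂(K x))
      = v₂ x - v₁ x - (u₂ x - u₁ x) := by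
    intro x
    have h1 : (∫ y, max (φ y (u₂ y) - φ y (u₁ y)) 0 ∂(K x))
        - (∫ y, max (φ y (u₁ y) - φ y (u₂ y)) 0 ∂(K x))
        = ∫ y, (max (φ y (u₂ y) - φ y (u₁ y)) 0 - max (φ y (u₁ y) - φ y (u₂ y)) 0) ∂(K x) :=
      (integral_sub (hfp x) (hfq x)).symm
    have h2 : ∀ y, max (φ y (u₂ y) - φ y (u₁ y)) 0 - max (φ y (u₁ y) - φ y (u₂ y)) 0
        = φ y (u₂ y) - φ y (u₁ y) := by
      intro y
      rcases le_total (φ y (u₂ y) - φ y (u₁ y)) 0 with h' | h'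
      · rw [max_eq_right h', max_eq_left (by linarith)]; ring
      · rw [max_eq_left h', max_eq_right (by linarith)]; ring
    rw [h1]
    simp_rw [h2]
    rw [integral_sub (hpint x) (hqint x)]
    have e1 := heq₁ x
    have e2 := heq₂ x
    linarith
  have hApos : ∀ x, 0 ≤ ∫ y, max (φ y (u₂ y) - φ y (u₁ y)) 0 ∂(K x) :=
    fun x => integral_nonneg fun y => le_max_right _ _
  have hBpos : ∀ x, 0 ≤ ∫ y, max (φ y (u₁ y) - φ y (u₂ y)) 0 ∂(K x) :=
    fun x => integral_nonneg fun y => le_max_right _ _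
  have keyA : ∀ w : X → ℝ≥0∞, (∀ x, ENNReal.ofReal (v₂ x - v₁ x) ≤ w x) →
      DomPrinciple K w →
      ∀ x, ENNReal.ofReal (v₂ x - v₁ x - (u₂ x - u₁ x)) ≤ w x := by
    intro w hwge hdom x
    have hgm : Measurable fun y => ENNReal.ofReal (φ y (u₂ y) - φ y (u₁ y)) :=
      (hpm.sub hqm).ennreal_ofReal
    have hhm : Measurable fun y => ENNReal.ofReal (φ y (u₁ y) - φ y (u₂ y)) :=
      (hqm.sub hpm).ennreal_ofReal
    have hprem : ∀ x, 0 < ENNReal.ofReal (φ x (u₂ x) - φ x (u₁ x)) →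
        ∫⁻ y, ENNReal.ofReal (φ y (u₂ y) - φ y (u₁ y)) ∂(K x)
          ≤ (∫⁻ y, ENNReal.ofReal (φ y (u₁ y) - φ y (u₂ y)) ∂(K x)) + w x := by
      intro x hx
      have hφlt : φ x (u₁ x) < φ x (u₂ x) := by
        have := ENNReal.ofReal_pos.mp hx; linarith
      have hult : u₁ x < u₂ x := by
        by_contra hc
        push_neg at hc
        exact absurd (hφmono x hc) (not_le.mpr hφlt)
      rw [hKg x, hKh x]
      have hsum : (∫ y, max (φ y (u₂ y) - φ y (u₁ y)) 0 ∂(K x))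
          = (∫ y, max (φ y (u₁ y) - φ y (u₂ y)) 0 ∂(K x)) + (v₂ x - v₁ x - (u₂ x - u₁ x)) := by
        have := hdiff x; linarith
      calc ENNReal.ofReal (∫ y, max (φ y (u₂ y) - φ y (u₁ y)) 0 ∂(K x))
          = ENNReal.ofReal ((∫ y, max (φ y (u₁ y) - φ y (u₂ y)) 0 ∂(K x))
              + (v₂ x - v₁ x - (u₂ x - u₁ x))) := by rw [hsum]
        _ ≤ ENNReal.ofReal (∫ y, max (φ y (u₁ y) - φ y (u₂ y)) 0 ∂(K x))
              + ENNReal.ofReal (v₂ x - v₁ x - (u₂ x - u₁ x)) := ENNReal.ofReal_add_le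
        _ ≤ ENNReal.ofReal (∫ y, max (φ y (u₁ y) - φ y (u₂ y)) 0 ∂(K x))
              + ENNReal.ofReal (v₂ x - v₁ x) :=
            add_le_add_right (ENNReal.ofReal_le_ofReal (by linarith)) _
        _ ≤ ENNReal.ofReal (∫ y, max (φ y (u₁ y) - φ y (u₂ y)) 0 ∂(K x)) + w x := by
            gcongr
            exact hwge x
    have hconc := hdom _ _ hgm hhm hprem x
    rw [hKg x, hKh x] at hconc
    have hd := hdiff x
    rw [← hd]
    rw [ENNReal.ofReal_sub _ (hBpos x)]
    rw [tsub_le_iff_right]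
    rwa [add_comm] at hconc
  refine ⟨fun w _ hwge hdom => keyA w hwge hdom, fun hv hdom => fun x => ?_⟩
  have hA := keyA (fun x => ENNReal.ofReal (v₂ x - v₁ x)) (fun x => le_rfl) hdom
  have hle : ∀ x, u₁ x ≤ u₂ x := by
    intro x
    have hx := hA x
    rcases le_or_gt (v₂ x - v₁ x - (u₂ x - u₁ x)) 0 with h' | h'
    · linarith [hv x]
    · have := (ENNReal.ofReal_le_ofReal_iff (hv x)).mp hx
      linarith
  refine ⟨by linarith [hle x], ?_⟩
  have hmono : ∀ y, φ y (u₁ y) ≤ φ y (u₂ y) := fun y => hφmono y (hle y)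
  have hint := integral_mono (hqint x) (hpint x) hmono
  have e1 := heq₁ x
  have e2 := heq₂ x
  linarith
end

section
/- Let X be a measurable space and K a kernel on X satisfying the domination principle relative to the zero function, i.e., for all Borel g, h : X → [0,∞], if Kg ≤ Kh at every point of {g > 0}, then Kg ≤ Kh everywhere on X. Let φ : X × ℝ → ℝ be Borel measurable with φ(x,0) = 0 and such that t ↦ φ(x,t) is increasing for every x ∈ X. If u₁, u₂ : X → ℝ are Borel with K|φ(·,u₁)| < ∞ and K|φ(·,u₂)| < ∞ pointwise, and u₁ + Kφ(·,u₁) = u₂ + Kφ(·,u₂), then u₁ = u₂. -/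
open MeasureTheory ProbabilityTheory
open scoped ENNReal

lemma stmt_5_aux {X : Type*} [MeasurableSpace X] (K : Kernel X X)
    (hdom : ∀ g h : X → ℝ≥0∞, Measurable g → Measurable h →
      (∀ x, 0 < g x → ∫⁻ y, g y ∂(K x) ≤ ∫⁻ y, h y ∂(K x)) →
      ∀ x, ∫⁻ y, g y ∂(K x) ≤ ∫⁻ y, h y ∂(K x))
    (φ : X → ℝ → ℝ) (hφm : Measurable (Function.uncurry φ))
    (hφmono : ∀ x, Monotone (φ x))
    (u₁ u₂ : X → ℝ)
    (hu₁ : Measurable u₁) (hu₂ : Measurable u₂)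
    (hfin₁ : ∀ x, ∫⁻ y, ENNReal.ofReal |φ y (u₁ y)| ∂(K x) < ⊤)
    (hfin₂ : ∀ x, ∫⁻ y, ENNReal.ofReal |φ y (u₂ y)| ∂(K x) < ⊤)
    (heq : ∀ x, u₁ x + ∫ y, φ y (u₁ y) ∂(K x) = u₂ x + ∫ y, φ y (u₂ y) ∂(K x)) :
    ∀ x, u₂ x ≤ u₁ x := by
  set f₁ : X → ℝ := fun y => φ y (u₁ y) with hf₁
  set f₂ : X → ℝ := fun y => φ y (u₂ y) with hf₂
  have hm1 : Measurable f₁ := hφm.comp (measurable_id.prodMk hu₁)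
  have hm2 : Measurable f₂ := hφm.comp (measurable_id.prodMk hu₂)
  set d : X → ℝ := fun y => f₁ y - f₂ y with hd
  have hmd : Measurable d := hm1.sub hm2
  -- integrability
  have hint : ∀ (f : X → ℝ), Measurable f →
      (∀ x, ∫⁻ y, ENNReal.ofReal |f y| ∂(K x) < ⊤) → ∀ x, Integrable f (K x) := by
    intro f hf hfin x
    refine ⟨hf.aestronglyMeasurable, ?_⟩
    rw [hasFiniteIntegral_iff_norm]
    simpa only [Real.norm_eq_abs] using hfin x
  have hint1 : ∀ x, Integrable f₁ (K x) := hint f₁ hm1 hfin₁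
  have hint2 : ∀ x, Integrable f₂ (K x) := hint f₂ hm2 hfin₂
  have hintd : ∀ x, Integrable d (K x) := fun x => (hint1 x).sub (hint2 x)
  -- u₁ x - u₂ x = - ∫ d
  have hkey : ∀ x, u₁ x - u₂ x = - ∫ y, d y ∂(K x) := by
    intro x
    have h := heq x
    rw [hd]
    rw [integral_sub (hint1 x) (hint2 x)]
    linarith
  set g : X → ℝ≥0∞ := fun y => ENNReal.ofReal (d y) with hg
  set h : X → ℝ≥0∞ := fun y => ENNReal.ofReal (-(d y)) with hh
  have hmg : Measurable g := hmd.ennreal_ofReal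
  have hmh : Measurable h := hmd.neg.ennreal_ofReal
  -- finiteness of the lintegrals of g and h
  have habs : ∀ x, ∫⁻ y, ENNReal.ofReal |d y| ∂(K x) < ⊤ := by
    intro x
    have hle : ∫⁻ y, ENNReal.ofReal |d y| ∂(K x)
        ≤ ∫⁻ y, (ENNReal.ofReal |f₁ y| + ENNReal.ofReal |f₂ y|) ∂(K x) := by
      refine lintegral_mono fun y => ?_
      rw [← ENNReal.ofReal_add (abs_nonneg _) (abs_nonneg _)]
      exact ENNReal.ofReal_le_ofReal (abs_sub _ _)
    have hsum : ∫⁻ y, (ENNReal.ofReal |f₁ y| + ENNReal.ofReal |f₂ y|) ∂(K x)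
        = (∫⁻ y, ENNReal.ofReal |f₁ y| ∂(K x)) + ∫⁻ y, ENNReal.ofReal |f₂ y| ∂(K x) :=
      lintegral_add_left hm1.abs.ennreal_ofReal _
    exact lt_of_le_of_lt (hle.trans hsum.le) (ENNReal.add_lt_top.2 ⟨hfin₁ x, hfin₂ x⟩)
  have hgfin : ∀ x, ∫⁻ y, g y ∂(K x) < ⊤ := fun x =>
    lt_of_le_of_lt (lintegral_mono fun y => ENNReal.ofReal_le_ofReal (le_abs_self _)) (habs x)
  have hhfin : ∀ x, ∫⁻ y, h y ∂(K x) < ⊤ := fun x =>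
    lt_of_le_of_lt (lintegral_mono fun y => ENNReal.ofReal_le_ofReal (neg_le_abs _)) (habs x)
  -- integral of d in terms of g and h
  have hrepr : ∀ x, ∫ y, d y ∂(K x)
      = (∫⁻ y, g y ∂(K x)).toReal - (∫⁻ y, h y ∂(K x)).toReal := fun x =>
    integral_eq_lintegral_pos_part_sub_lintegral_neg_part (hintd x)
  -- domination hypothesis applies
  have hdall : ∀ x, ∫⁻ y, g y ∂(K x) ≤ ∫⁻ y, h y ∂(K x) := by
    refine hdom g h hmg hmh fun x hx => ?_
    have hdx : 0 < d x := by
      by_contra hc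
      push_neg at hc
      simp [hg, ENNReal.ofReal_eq_zero.2 hc] at hx
    have hux : u₂ x < u₁ x := by
      by_contra hc
      push_neg at hc
      have := hφmono x hc
      simp only [hd, hf₁, hf₂] at hdx
      linarith
    have hneg : ∫ y, d y ∂(K x) < 0 := by
      have := hkey x
      linarith
    rw [hrepr x] at hneg
    have : (∫⁻ y, g y ∂(K x)).toReal < (∫⁻ y, h y ∂(K x)).toReal := by linarith
    exact le_of_lt ((ENNReal.toReal_lt_toReal (hgfin x).ne (hhfin x).ne).mp this)
  intro x
  have hle : ∫ y, d y ∂(K x) ≤ 0 := by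
    rw [hrepr x]
    have := ENNReal.toReal_mono (hhfin x).ne (hdall x)
    linarith
  have := hkey x
  linarith

theorem stmt_5 {X : Type*} [MeasurableSpace X] (K : Kernel X X)
    (hdom : ∀ g h : X → ℝ≥0∞, Measurable g → Measurable h →
      (∀ x, 0 < g x → ∫⁻ y, g y ∂(K x) ≤ ∫⁻ y, h y ∂(K x)) →
      ∀ x, ∫⁻ y, g y ∂(K x) ≤ ∫⁻ y, h y ∂(K x))
    (φ : X → ℝ → ℝ) (hφm : Measurable (Function.uncurry φ))
    (hφ0 : ∀ x, φ x 0 = 0) (hφmono : ∀ x, Monotone (φ x))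
    (u₁ u₂ : X → ℝ) (hu₁ : Measurable u₁) (hu₂ : Measurable u₂)
    (hfin₁ : ∀ x, ∫⁻ y, ENNReal.ofReal |φ y (u₁ y)| ∂(K x) < ⊤)
    (hfin₂ : ∀ x, ∫⁻ y, ENNReal.ofReal |φ y (u₂ y)| ∂(K x) < ⊤)
    (heq : ∀ x, u₁ x + ∫ y, φ y (u₁ y) ∂(K x) = u₂ x + ∫ y, φ y (u₂ y) ∂(K x)) :
    u₁ = u₂ := by
  funext x
  exact le_antisymm
    (stmt_5_aux K hdom φ hφm hφmono u₂ u₁ hu₂ hu₁ hfin₂ hfin₁ (fun x => (heq x).symm) x)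
    (stmt_5_aux K hdom φ hφm hφmono u₁ u₂ hu₁ hu₂ hfin₁ hfin₂ heq x)
end

section
/- Let X be a measurable space and K a kernel on X satisfying the domination principle relative to the zero function, i.e., for all Borel g, h : X → [0,∞], if Kg ≤ Kh at every point of {g > 0}, then Kg ≤ Kh everywhere on X. Let φ, φ̃ : X × ℝ → ℝ be Borel measurable with φ̃ ≤ φ pointwise, φ(x,0) = 0, and t ↦ φ(x,t) increasing for every x ∈ X. Suppose u, ũ : X → ℝ are Borel with K(|φ(·,u)| + |φ̃(·,ũ)|) < ∞ pointwise and u + Kφ(·,u) = ũ + Kφ̃(·,ũ). Then u ≤ ũ on X. -/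
open MeasureTheory ProbabilityTheory
open scoped ENNReal

theorem stmt_6 {X : Type*} [MeasurableSpace X] (K : Kernel X X)
    (hdom : ∀ g h : X → ℝ≥0∞, Measurable g → Measurable h →
      (∀ x, 0 < g x → ∫⁻ y, g y ∂(K x) ≤ ∫⁻ y, h y ∂(K x)) →
      ∀ x, ∫⁻ y, g y ∂(K x) ≤ ∫⁻ y, h y ∂(K x))
    (φ φ' : X → ℝ → ℝ)
    (hφm : Measurable (Function.uncurry φ)) (hφ'm : Measurable (Function.uncurry φ'))
    (hle : ∀ x t, φ' x t ≤ φ x t)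
    (hφ0 : ∀ x, φ x 0 = 0) (hφmono : ∀ x, Monotone (φ x))
    (u u' : X → ℝ) (hu : Measurable u) (hu' : Measurable u')
    (hfin : ∀ x, ∫⁻ y, ENNReal.ofReal (|φ y (u y)| + |φ' y (u' y)|) ∂(K x) < ⊤)
    (heq : ∀ x, u x + ∫ y, φ y (u y) ∂(K x) = u' x + ∫ y, φ' y (u' y) ∂(K x)) :
    ∀ x, u x ≤ u' x := by
  set f : X → ℝ := fun y => φ y (u y) - φ' y (u' y) with hf
  have mφu : Measurable fun y => φ y (u y) := hφm.comp (measurable_id.prodMk hu)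
  have mφ'u' : Measurable fun y => φ' y (u' y) := hφ'm.comp (measurable_id.prodMk hu')
  have mf : Measurable f := mφu.sub mφ'u'
  set g : X → ℝ≥0∞ := fun y => ENNReal.ofReal (-(f y)) with hg
  set h : X → ℝ≥0∞ := fun y => ENNReal.ofReal (f y) with hh
  have mg : Measurable g := ENNReal.measurable_ofReal.comp mf.neg
  have mh : Measurable h := ENNReal.measurable_ofReal.comp mf
  -- pointwise bounds
  have hb1 : ∀ y, (‖φ y (u y)‖₊ : ℝ≥0∞) ≤ ENNReal.ofReal (|φ y (u y)| + |φ' y (u' y)|) := by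
    intro y
    rw [← enorm_eq_nnnorm, ← ofReal_norm, Real.norm_eq_abs]
    exact ENNReal.ofReal_le_ofReal (by simp [abs_nonneg])
  have hb2 : ∀ y, (‖φ' y (u' y)‖₊ : ℝ≥0∞) ≤ ENNReal.ofReal (|φ y (u y)| + |φ' y (u' y)|) := by
    intro y
    rw [← enorm_eq_nnnorm, ← ofReal_norm, Real.norm_eq_abs]
    exact ENNReal.ofReal_le_ofReal (by simp [abs_nonneg])
  have hbg : ∀ y, g y ≤ ENNReal.ofReal (|φ y (u y)| + |φ' y (u' y)|) := by
    intro y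
    refine ENNReal.ofReal_le_ofReal ?_
    have h1 := le_abs_self (φ y (u y)); have h2 := neg_abs_le (φ y (u y))
    have h3 := le_abs_self (φ' y (u' y)); have h4 := neg_abs_le (φ' y (u' y))
    simp only [hf]; linarith
  have hbh : ∀ y, h y ≤ ENNReal.ofReal (|φ y (u y)| + |φ' y (u' y)|) := by
    intro y
    refine ENNReal.ofReal_le_ofReal ?_
    have h1 := le_abs_self (φ y (u y)); have h2 := neg_abs_le (φ y (u y))
    have h3 := le_abs_self (φ' y (u' y)); have h4 := neg_abs_le (φ' y (u' y))
    simp only [hf]; linarith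
  -- finiteness
  have hgfin : ∀ x, ∫⁻ y, g y ∂(K x) < ⊤ := fun x =>
    lt_of_le_of_lt (lintegral_mono hbg) (hfin x)
  have hhfin : ∀ x, ∫⁻ y, h y ∂(K x) < ⊤ := fun x =>
    lt_of_le_of_lt (lintegral_mono hbh) (hfin x)
  -- integrability
  have hint1 : ∀ x, Integrable (fun y => φ y (u y)) (K x) := by
    intro x
    refine ⟨mφu.aestronglyMeasurable, ?_⟩
    exact lt_of_le_of_lt (lintegral_mono hb1) (hfin x)
  have hint2 : ∀ x, Integrable (fun y => φ' y (u' y)) (K x) := by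
    intro x
    refine ⟨mφ'u'.aestronglyMeasurable, ?_⟩
    exact lt_of_le_of_lt (lintegral_mono hb2) (hfin x)
  -- key identity : u' x - u x = (∫⁻ h).toReal - (∫⁻ g).toReal
  have key : ∀ x, u' x - u x = (∫⁻ y, h y ∂(K x)).toReal - (∫⁻ y, g y ∂(K x)).toReal := by
    intro x
    have hi : ∫ y, f y ∂(K x) = (∫⁻ y, h y ∂(K x)).toReal - (∫⁻ y, g y ∂(K x)).toReal :=
      integral_eq_lintegral_pos_part_sub_lintegral_neg_part ((hint1 x).sub (hint2 x))
    have hs : ∫ y, f y ∂(K x) = (∫ y, φ y (u y) ∂(K x)) - ∫ y, φ' y (u' y) ∂(K x) :=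
      integral_sub (hint1 x) (hint2 x)
    have := heq x
    linarith [hi, hs, this]
  -- g x > 0 implies u x ≤ u' x
  have hgpos : ∀ x, 0 < g x → u x ≤ u' x := by
    intro x hx
    by_contra hlt
    push_neg at hlt
    have : 0 ≤ f x := by
      have h1 : φ' x (u' x) ≤ φ x (u' x) := hle x (u' x)
      have h2 : φ x (u' x) ≤ φ x (u x) := hφmono x hlt.le
      simp only [hf]; linarith
    simp only [hg, ENNReal.ofReal_pos] at hx
    linarith
  -- domination hypothesis applies
  have hdome : ∀ x, ∫⁻ y, g y ∂(K x) ≤ ∫⁻ y, h y ∂(K x) := by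
    refine hdom g h mg mh ?_
    intro x hx
    have hux := hgpos x hx
    have := key x
    rw [← ENNReal.toReal_le_toReal (hgfin x).ne (hhfin x).ne]
    linarith
  intro x
  have := key x
  have h2 := (ENNReal.toReal_le_toReal (hgfin x).ne (hhfin x).ne).mpr (hdome x)
  linarith
end

section
/- Let X be a measurable space, c > 0, and K a kernel on X such that K(x,X) < ∞ for every x ∈ X and with the following compactness property: every sequence (g_n) of Borel functions on X with |g_n| ≤ c admits a subsequence along which (Kg_n) converges uniformly on X. Let φ : X × ℝ → ℝ be Borel measurable with |φ| ≤ c and t ↦ φ(x,t) continuous for every x ∈ X. If (u_n) is a sequence of Borel real functions on X converging pointwise to a Borel real function u, then the functions Kφ(·,u_n) converge to Kφ(·,u) uniformly on X. -/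
open MeasureTheory ProbabilityTheory Filter
open scoped ENNReal

theorem stmt_7 {X : Type*} [MeasurableSpace X] (c : ℝ) (hc : 0 < c) (K : Kernel X X)
    (hKfin : ∀ x, K x Set.univ < ⊤)
    (hcomp : ∀ g : ℕ → X → ℝ, (∀ n, Measurable (g n)) → (∀ n x, |g n x| ≤ c) →
      ∃ σ : ℕ → ℕ, StrictMono σ ∧ ∃ F : X → ℝ,
        TendstoUniformly (fun k x => ∫ y, g (σ k) y ∂(K x)) F atTop)
    (φ : X → ℝ → ℝ) (hφm : Measurable (Function.uncurry φ))
    (hφb : ∀ x t, |φ x t| ≤ c) (hφc : ∀ x, Continuous (φ x))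
    (u : ℕ → X → ℝ) (hum : ∀ n, Measurable (u n))
    (ulim : X → ℝ) (hulm : Measurable ulim)
    (hconv : ∀ x, Tendsto (fun n => u n x) atTop (nhds (ulim x))) :
    TendstoUniformly (fun n x => ∫ y, φ y (u n y) ∂(K x))
      (fun x => ∫ y, φ y (ulim y) ∂(K x)) atTop := by
  set f : ℕ → X → ℝ := fun n x => ∫ y, φ y (u n y) ∂(K x) with hfdef
  set g : X → ℝ := fun x => ∫ y, φ y (ulim y) ∂(K x) with hgdef
  have hmeas : ∀ n, Measurable fun y => φ y (u n y) :=
    fun n => hφm.comp (measurable_id.prodMk (hum n))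
  have hpt : ∀ x, Tendsto (fun n => f n x) atTop (nhds (g x)) := by
    intro x
    have : IsFiniteMeasure (K x) := ⟨hKfin x⟩
    exact tendsto_integral_of_dominated_convergence (fun _ => c)
      (fun n => (hmeas n).aestronglyMeasurable)
      (integrable_const c)
      (fun n => Eventually.of_forall fun y => by
        simpa [Real.norm_eq_abs] using hφb y (u n y))
      (Eventually.of_forall fun y => ((hφc y).tendsto _).comp (hconv y))
  by_contra hcon
  rw [Metric.tendstoUniformly_iff] at hcon
  push_neg at hcon
  obtain ⟨ε, hε, hfreq⟩ := hcon
  have hfreq' : ∃ᶠ n in atTop, ∃ x, ε ≤ dist (g x) (f n x) := by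
    exact hfreq
  obtain ⟨σ, hσ, hσ'⟩ := Filter.extraction_of_frequently_atTop hfreq'
  obtain ⟨τ, hτ, F, hF⟩ := hcomp (fun k y => φ y (u (σ k) y))
    (fun k => hmeas (σ k)) (fun k y => hφb y (u (σ k) y))
  have hFeq : F = g := by
    funext x
    have h1 : Tendsto (fun j => f (σ (τ j)) x) atTop (nhds (F x)) := hF.tendsto_at x
    have h2 : Tendsto (fun j => f (σ (τ j)) x) atTop (nhds (g x)) :=
      (hpt x).comp ((hσ.comp hτ).tendsto_atTop)
    exact tendsto_nhds_unique h1 h2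
  rw [hFeq] at hF
  rw [Metric.tendstoUniformly_iff] at hF
  obtain ⟨j, hj⟩ := (hF ε hε).exists
  obtain ⟨x, hx⟩ := hσ' (τ j)
  exact absurd (hj x) (not_lt.mpr hx)
end

section
/- Let X be a locally compact Hausdorff space with countable base of open sets, and let P be a sub-Markov kernel on X (that is, P(x,X) ≤ 1 for all x) which is strong Feller, i.e., Pf is continuous for every bounded Borel function f on X. Let x ∈ X be such that P(x,·) ≠ δ_x. Then there exist η ∈ (0,1) and an open set V with compact closure such that x ∈ V and P(z,V) ≤ η for every z ∈ V. -/
open MeasureTheory ProbabilityTheory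
open scoped ENNReal

theorem stmt_10 {X : Type*} [TopologicalSpace X] [LocallyCompactSpace X] [T2Space X]
    [SecondCountableTopology X] [MeasurableSpace X] [BorelSpace X]
    (P : Kernel X X) (hsub : ∀ z, P z Set.univ ≤ 1)
    (hFeller : ∀ f : X → ℝ, Measurable f → (∃ C, ∀ z, |f z| ≤ C) →
      Continuous fun z => ∫ y, f y ∂(P z))
    (x : X) (hx : P x ≠ Measure.dirac x) :
    ∃ η ∈ Set.Ioo (0 : ℝ) 1, ∃ V : Set X, IsOpen V ∧ IsCompact (closure V) ∧ x ∈ V ∧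
      ∀ z ∈ V, P z V ≤ ENNReal.ofReal η := by
  have hfin : ∀ z, IsFiniteMeasure (P z) :=
    fun z => ⟨lt_of_le_of_lt (hsub z) ENNReal.one_lt_top⟩
  haveI := hfin x
  -- Step 1: an open W₀ ∋ x with P x W₀ < 1
  obtain ⟨W₀, hW₀open, hxW₀, hW₀lt⟩ : ∃ W₀ : Set X, IsOpen W₀ ∧ x ∈ W₀ ∧ P x W₀ < 1 := by
    by_cases huniv : P x Set.univ < 1
    · exact ⟨Set.univ, isOpen_univ, Set.mem_univ x, huniv⟩
    · have huniv' : P x Set.univ = 1 := le_antisymm (hsub x) (not_lt.1 huniv)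
      have hU : ∃ U : Set X, IsOpen U ∧ P x U ≠ Measure.dirac x U := by
        by_contra h
        push_neg at h
        refine hx (MeasureTheory.ext_of_generate_finite {s : Set X | IsOpen s} ?_
          isPiSystem_isOpen (fun s hs => h s hs) ?_)
        · rw [BorelSpace.measurable_eq (α := X)]; rfl
        · simp [huniv']
      obtain ⟨U, hUopen, hUne⟩ := hU
      by_cases hxU : x ∈ U
      · refine ⟨U, hUopen, hxU, lt_of_le_of_ne ?_ ?_⟩
        · calc P x U ≤ P x Set.univ := measure_mono (Set.subset_univ _)
          _ = 1 := huniv'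
        · intro h1
          exact hUne (by rw [h1, Measure.dirac_apply' x hUopen.measurableSet,
            Set.indicator_of_mem hxU, Pi.one_apply])
      · have hUpos : 0 < P x U := by
          rcases eq_or_lt_of_le (zero_le : 0 ≤ P x U) with h0 | h0
          · exact absurd (by rw [← h0, Measure.dirac_apply' x hUopen.measurableSet,
              Set.indicator_of_notMem hxU]) hUne
          · exact h0
        obtain ⟨K, hKU, hKcomp, hKpos⟩ := hUopen.exists_lt_isCompact hUpos
        refine ⟨Kᶜ, hKcomp.isClosed.isOpen_compl, fun hxK => hxU (hKU hxK), ?_⟩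
        rw [measure_compl hKcomp.isClosed.measurableSet (measure_ne_top _ _), huniv']
        exact ENNReal.sub_lt_self ENNReal.one_ne_top one_ne_zero (ne_of_gt hKpos)
  -- shrink to a relatively compact open set W
  obtain ⟨U₁, hU₁open, hxU₁, hU₁c⟩ := exists_isOpen_mem_isCompact_closure x
  set W := W₀ ∩ U₁ with hWdef
  have hWopen : IsOpen W := hW₀open.inter hU₁open
  have hxW : x ∈ W := ⟨hxW₀, hxU₁⟩
  have hWlt : P x W < 1 := lt_of_le_of_lt (measure_mono Set.inter_subset_left) hW₀lt
  -- continuity of z ↦ (P z W).toReal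
  have hg : Continuous fun z => (P z W).toReal := by
    have hmeas : Measurable (W.indicator (1 : X → ℝ)) :=
      measurable_one.indicator hWopen.measurableSet
    have hbd : ∃ C, ∀ z, |W.indicator (1 : X → ℝ) z| ≤ C := by
      refine ⟨1, fun z => ?_⟩
      by_cases hz : z ∈ W <;> simp [Set.indicator_apply, hz]
    have := hFeller _ hmeas hbd
    convert this using 2 with z
    rw [MeasureTheory.integral_indicator_one hWopen.measurableSet]
    rfl
  -- the constants
  set c := (P x W).toReal with hcdef
  have hc1 : c < 1 := by
    have := ENNReal.toReal_strict_mono ENNReal.one_ne_top hWlt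
    simpa using this
  have hc0 : 0 ≤ c := ENNReal.toReal_nonneg
  set η := (c + 1) / 2 with hηdef
  have hη0 : 0 < η := by positivity
  have hη1 : η < 1 := by rw [hηdef]; linarith
  have hcη : c < η := by rw [hηdef]; linarith
  -- the set V
  refine ⟨η, ⟨hη0, hη1⟩, W ∩ (fun z => (P z W).toReal) ⁻¹' Set.Iio η,
    hWopen.inter (isOpen_Iio.preimage hg), ?_, ⟨hxW, hcη⟩, ?_⟩
  · refine hU₁c.of_isClosed_subset isClosed_closure ?_
    exact closure_mono (Set.inter_subset_left.trans Set.inter_subset_right)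
  · intro z hz
    haveI := hfin z
    have h1 : P z (W ∩ (fun z => (P z W).toReal) ⁻¹' Set.Iio η) ≤ P z W :=
      measure_mono Set.inter_subset_left
    refine h1.trans ?_
    have hzW : (P z W).toReal < η := hz.2
    exact le_of_lt ((ENNReal.lt_ofReal_iff_toReal_lt (measure_ne_top _ _)).mpr hzW)
end

section
/- Let X be a locally compact Hausdorff space with countable base and λ > 0. Let u, v : X → ℝ be continuous with 0 < u ≤ 1 and v ≥ 1 on X, and suppose the function x ↦ u(x)/v(x) vanishes at infinity on X. Then the function f : X × ℝ → ℝ defined by f(x,s) := min(u(x)·e^{λs}, 1) / (1 + v(x)·e^{λs}) is continuous and vanishes at infinity on X × ℝ; in particular f(x,s) ≤ min(u(x)/v(x), e^{−λ|s|}) for all (x,s). -/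
open Filter

theorem stmt_12 {X : Type*} [TopologicalSpace X] [LocallyCompactSpace X] [T2Space X]
    [SecondCountableTopology X]
    (lam : ℝ) (hlam : 0 < lam) (u v : X → ℝ) (hu : Continuous u) (hv : Continuous v)
    (hu0 : ∀ x, 0 < u x) (hu1 : ∀ x, u x ≤ 1) (hv1 : ∀ x, 1 ≤ v x)
    (huv : Tendsto (fun x => u x / v x) (cocompact X) (nhds 0)) :
    Continuous (fun p : X × ℝ =>
      min (u p.1 * Real.exp (lam * p.2)) 1 / (1 + v p.1 * Real.exp (lam * p.2))) ∧
    Tendsto (fun p : X × ℝ =>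
        min (u p.1 * Real.exp (lam * p.2)) 1 / (1 + v p.1 * Real.exp (lam * p.2)))
      (cocompact (X × ℝ)) (nhds 0) ∧
    ∀ (x : X) (s : ℝ),
      min (u x * Real.exp (lam * s)) 1 / (1 + v x * Real.exp (lam * s)) ≤
        min (u x / v x) (Real.exp (-(lam * |s|))) := by
  have hE : ∀ s : ℝ, 0 < Real.exp (lam * s) := fun s => Real.exp_pos _
  have hD : ∀ (x : X) (s : ℝ), 0 < 1 + v x * Real.exp (lam * s) := by
    intro x s
    nlinarith [hv1 x, hE s]
  have hnum : ∀ (x : X) (s : ℝ), 0 ≤ min (u x * Real.exp (lam * s)) 1 := fun x s =>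
    le_min (le_of_lt (mul_pos (hu0 x) (hE s))) one_pos.le
  set f : X × ℝ → ℝ := fun p =>
    min (u p.1 * Real.exp (lam * p.2)) 1 / (1 + v p.1 * Real.exp (lam * p.2)) with hf
  have hfpos : ∀ p : X × ℝ, 0 ≤ f p := fun p => div_nonneg (hnum _ _) (hD _ _).le
  have hbound : ∀ (x : X) (s : ℝ),
      f (x, s) ≤ min (u x / v x) (Real.exp (-(lam * |s|))) := by
    intro x s
    have hE' := hE s
    have hD' := hD x s
    have hvE : 0 < v x * Real.exp (lam * s) :=
      mul_pos (lt_of_lt_of_le one_pos (hv1 x)) hE'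
    refine le_min ?_ ?_
    · have h1 : f (x, s) ≤ (u x * Real.exp (lam * s)) / (v x * Real.exp (lam * s)) := by
        apply div_le_div₀ (mul_nonneg (hu0 x).le hE'.le) (min_le_left _ _) hvE
        linarith
      rwa [mul_div_mul_right _ _ hE'.ne'] at h1
    · rcases le_or_gt 0 s with hs | hs
      · rw [abs_of_nonneg hs, Real.exp_neg]
        have h2 : f (x, s) ≤ 1 / (1 + v x * Real.exp (lam * s)) :=
          div_le_div₀ one_pos.le (min_le_right _ _) hD' le_rfl
        have h3 : Real.exp (lam * s) ≤ 1 + v x * Real.exp (lam * s) := by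
          nlinarith [hv1 x, hE'.le]
        calc f (x, s) ≤ 1 / (1 + v x * Real.exp (lam * s)) := h2
          _ ≤ 1 / Real.exp (lam * s) := one_div_le_one_div_of_le hE' h3
          _ = (Real.exp (lam * s))⁻¹ := one_div _
      · rw [abs_of_neg hs]
        have heq : -(lam * -s) = lam * s := by ring
        rw [heq]
        calc f (x, s) ≤ min (u x * Real.exp (lam * s)) 1 :=
              div_le_self (hnum x s) (by nlinarith [hv1 x, hE'.le])
          _ ≤ u x * Real.exp (lam * s) := min_le_left _ _
          _ ≤ Real.exp (lam * s) := by nlinarith [hu1 x, hu0 x, hE'.le]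
  have hcont : Continuous f := by
    apply Continuous.div
    · exact (((hu.comp continuous_fst).mul
        (Real.continuous_exp.comp (continuous_const.mul continuous_snd))).min continuous_const)
    · exact continuous_const.add ((hv.comp continuous_fst).mul
        (Real.continuous_exp.comp (continuous_const.mul continuous_snd)))
    · intro p; exact (hD p.1 p.2).ne'
  refine ⟨hcont, ?_, fun x s => hbound x s⟩
  have hexp : Tendsto (fun s : ℝ => Real.exp (-(lam * |s|))) (cocompact ℝ) (nhds 0) := by
    apply Real.tendsto_exp_atBot.comp
    apply Filter.tendsto_neg_atTop_atBot.comp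
    apply (Filter.Tendsto.const_mul_atTop hlam)
    have := tendsto_norm_cocompact_atTop (E := ℝ)
    simpa [show (norm : ℝ → ℝ) = abs from funext Real.norm_eq_abs] using this
  have hg : Tendsto f (Filter.comap Prod.fst (cocompact X)) (nhds 0) := by
    apply tendsto_of_tendsto_of_tendsto_of_le_of_le tendsto_const_nhds
      (huv.comp tendsto_comap) hfpos
    intro p
    exact (hbound p.1 p.2).trans (min_le_left _ _)
  have hh : Tendsto f (Filter.comap Prod.snd (cocompact ℝ)) (nhds 0) := by
    apply tendsto_of_tendsto_of_tendsto_of_le_of_le tendsto_const_nhds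
      (hexp.comp tendsto_comap) hfpos
    intro p
    exact (hbound p.1 p.2).trans (min_le_right _ _)
  have : Tendsto f (cocompact (X × ℝ)) (nhds 0) := by
    rw [← coprod_cocompact, Filter.coprod]
    exact tendsto_sup.2 ⟨hg, hh⟩
  exact this
end

section
/- Let d ≥ 1 be a natural number, let α ∈ (0,2] with α < d, let γ ∈ ℝ and c > 0. For x ∈ ℝ^d put I(x) := ∫_{{y ∈ ℝ^d : |y| ≥ 1}} |x−y|^{α−d} · |y|^{−γ} (|y|^c − 1) dy (Lebesgue integral). Then the following are equivalent: (a) c < γ − α; (b) I(x) < ∞ for every x ∈ ℝ^d; (c) I(x) < ∞ for some x ∈ ℝ^d. -/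
open MeasureTheory
open scoped ENNReal
open Metric Set

private lemma geom_tsum_lt_top {q : ℝ} (h0 : 0 ≤ q) (h1 : q < 1) :
    (∑' n : ℕ, ENNReal.ofReal (q ^ n)) < ⊤ := by
  have h : ∀ n : ℕ, ENNReal.ofReal (q ^ n) = (ENNReal.ofReal q) ^ n := fun n =>
    ENNReal.ofReal_pow h0 n
  simp_rw [h, ENNReal.tsum_geometric]
  refine ENNReal.inv_lt_top.2 ?_
  rw [tsub_pos_iff_lt]
  exact ENNReal.ofReal_lt_one.2 h1

private lemma exists_pow2 {x : ℝ} (hx : 1 ≤ x) : ∃ n : ℕ, 2 ^ n ≤ x ∧ x < 2 ^ (n + 1) := by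
  have hk : 0 ≤ Int.log 2 x := (Int.log_one_right (R := ℝ) 2) ▸ Int.log_mono_right one_pos hx
  refine ⟨(Int.log 2 x).toNat, ?_, ?_⟩
  · have := Int.zpow_log_le_self (b := 2) one_lt_two (by linarith : (0:ℝ) < x)
    rwa [← Int.toNat_of_nonneg hk, zpow_natCast] at this
  · have := Int.lt_zpow_succ_log_self (b := 2) one_lt_two x
    rwa [← Int.toNat_of_nonneg hk, ← Nat.cast_one, ← Nat.cast_add, zpow_natCast] at this

private lemma pow_rpow_eq {n : ℕ} {s : ℝ} : ((2:ℝ) ^ n) ^ s = (2:ℝ) ^ ((n:ℝ) * s) := by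
  rw [← Real.rpow_natCast 2 n, ← Real.rpow_mul (by norm_num)]

private lemma L1 (d : ℕ) (hd : 0 < d) (s : ℝ) (hs : s < -(d:ℝ)) :
    ∫⁻ y in {y : EuclideanSpace ℝ (Fin d) | 1 ≤ ‖y‖}, ENNReal.ofReal (‖y‖ ^ s) < ⊤ := by
  haveI : Nontrivial (EuclideanSpace ℝ (Fin d)) :=
    Module.nontrivial_of_finrank_pos (R := ℝ) (by rw [finrank_euclideanSpace_fin]; exact hd)
  set E := EuclideanSpace ℝ (Fin d)
  set volB := volume (ball (0:E) 1) with hvolB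
  have hd0 : (0:ℝ) < d := by exact_mod_cast hd
  have hs0 : s ≤ 0 := by linarith
  set A : ℕ → Set E := fun n => {y : E | (2:ℝ)^n ≤ ‖y‖} ∩ ball 0 ((2:ℝ)^(n+1)) with hA
  set q : ℝ := (2:ℝ)^s * (2:ℝ)^((d:ℝ)) with hq
  have hq0 : 0 ≤ q := by positivity
  have hq1 : q < 1 := by
    rw [hq, ← Real.rpow_add two_pos]
    exact Real.rpow_lt_one_of_one_lt_of_neg one_lt_two (by linarith)
  -- per annulus bound
  have key : ∀ n : ℕ, ∫⁻ y in A n, ENNReal.ofReal (‖y‖ ^ s)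
      ≤ ENNReal.ofReal ((2:ℝ)^((d:ℝ)) * q ^ n) * volB := by
    intro n
    have h1 : ∫⁻ y in A n, ENNReal.ofReal (‖y‖ ^ s)
        ≤ ∫⁻ _ in A n, ENNReal.ofReal (((2:ℝ)^n) ^ s) := by
      refine setLIntegral_mono measurable_const (fun y hy => ENNReal.ofReal_le_ofReal ?_)
      exact Real.rpow_le_rpow_of_nonpos (by positivity) hy.1 hs0
    rw [setLIntegral_const] at h1
    have h2 : volume (A n) ≤ volume (ball (0:E) ((2:ℝ)^(n+1))) :=
      measure_mono inter_subset_right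
    have h3 : volume (ball (0:E) ((2:ℝ)^(n+1)))
        = ENNReal.ofReal (((2:ℝ)^(n+1)) ^ (d:ℕ)) * volB := by
      rw [Measure.addHaar_ball _ _ (by positivity : (0:ℝ) ≤ (2:ℝ)^(n+1)),
        finrank_euclideanSpace_fin]
    have halg : ((2:ℝ)^n) ^ s * ((2:ℝ)^(n+1)) ^ (d:ℕ) = (2:ℝ)^((d:ℝ)) * q ^ n := by
      have e1 : ((2:ℝ)^n) ^ s = ((2:ℝ)^s) ^ n := by
        rw [pow_rpow_eq, mul_comm, Real.rpow_mul (by norm_num), Real.rpow_natCast]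
      have e2 : ((2:ℝ)^(n+1)) ^ (d:ℕ) = (2:ℝ)^((d:ℝ)) * ((2:ℝ)^((d:ℝ))) ^ n := by
        have : ((2:ℝ)^((d:ℝ))) = (2:ℝ)^(d:ℕ) := by rw [Real.rpow_natCast]
        rw [this, ← pow_mul, ← pow_mul]
        ring
      rw [e1, e2, hq, mul_pow]
      ring
    calc ∫⁻ y in A n, ENNReal.ofReal (‖y‖ ^ s)
        ≤ ENNReal.ofReal (((2:ℝ)^n) ^ s) * volume (A n) := h1
      _ ≤ ENNReal.ofReal (((2:ℝ)^n) ^ s) * (ENNReal.ofReal (((2:ℝ)^(n+1)) ^ (d:ℕ)) * volB) := by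
          rw [← h3]; exact mul_le_mul_right h2 _
      _ = ENNReal.ofReal ((2:ℝ)^((d:ℝ)) * q ^ n) * volB := by
          rw [← mul_assoc, ← ENNReal.ofReal_mul (by positivity), halg]
  have hsub : {y : E | 1 ≤ ‖y‖} ⊆ ⋃ n, A n := by
    intro y hy
    obtain ⟨n, hn1, hn2⟩ := exists_pow2 hy
    exact mem_iUnion.2 ⟨n, hn1, by simpa [mem_ball_zero_iff] using hn2⟩
  calc ∫⁻ y in {y : E | 1 ≤ ‖y‖}, ENNReal.ofReal (‖y‖ ^ s)
      ≤ ∫⁻ y in ⋃ n, A n, ENNReal.ofReal (‖y‖ ^ s) := lintegral_mono_set hsub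
    _ ≤ ∑' n, ∫⁻ y in A n, ENNReal.ofReal (‖y‖ ^ s) := lintegral_iUnion_le _ _
    _ ≤ ∑' n : ℕ, ENNReal.ofReal ((2:ℝ)^((d:ℝ)) * q ^ n) * volB := ENNReal.tsum_le_tsum key
    _ = ENNReal.ofReal ((2:ℝ)^((d:ℝ))) * ((∑' n : ℕ, ENNReal.ofReal (q ^ n)) * volB) := by
        simp_rw [ENNReal.ofReal_mul (by positivity : (0:ℝ) ≤ (2:ℝ)^((d:ℝ))), mul_assoc,
          ENNReal.tsum_mul_left, ENNReal.tsum_mul_right]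
    _ < ⊤ := ENNReal.mul_lt_top ENNReal.ofReal_lt_top
        (ENNReal.mul_lt_top (geom_tsum_lt_top hq0 hq1) measure_ball_lt_top)

private lemma L2 (d : ℕ) (hd : 0 < d) (s : ℝ) (hs : -(d:ℝ) ≤ s) (R : ℝ) :
    ∫⁻ y in {y : EuclideanSpace ℝ (Fin d) | R ≤ ‖y‖}, ENNReal.ofReal (‖y‖ ^ s) = ⊤ := by
  haveI : Nontrivial (EuclideanSpace ℝ (Fin d)) :=
    Module.nontrivial_of_finrank_pos (R := ℝ) (by rw [finrank_euclideanSpace_fin]; exact hd)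
  set E := EuclideanSpace ℝ (Fin d)
  set volB := volume (ball (0:E) 1) with hvolB
  obtain ⟨N, hN⟩ := exists_nat_ge R
  have hNR : R ≤ (2:ℝ) ^ N := by
    refine hN.trans ?_
    exact_mod_cast (Nat.lt_two_pow_self (n := N)).le
  set A : ℕ → Set E := fun n => {y : E | (2:ℝ)^n ≤ ‖y‖} ∩ ball 0 ((2:ℝ)^(n+1)) with hA
  have hmeas : ∀ n, MeasurableSet (A n) := fun n =>
    (measurableSet_le measurable_const measurable_norm).inter measurableSet_ball
  have hdisj' : ∀ m n, m < n → Disjoint (A m) (A n) := by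
    intro m n hmn
    refine Set.disjoint_left.2 fun y hym hyn => ?_
    have h1 : ‖y‖ < (2:ℝ)^(m+1) := by simpa [hA, mem_ball_zero_iff] using hym.2
    have h2 : (2:ℝ)^n ≤ ‖y‖ := hyn.1
    have : (2:ℝ)^(m+1) ≤ (2:ℝ)^n := pow_le_pow_right₀ one_le_two hmn
    linarith
  -- lower bound on annulus volume
  have hA_eq : ∀ n, A n = ball (0:E) ((2:ℝ)^(n+1)) \ ball 0 ((2:ℝ)^n) := by
    intro n
    ext y
    simp only [hA, mem_inter_iff, mem_setOf_eq, mem_diff, mem_ball_zero_iff, not_lt]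
    tauto
  have hA_vol : ∀ n, ENNReal.ofReal (((2:ℝ)^n)^(d:ℕ)) * volB ≤ volume (A n) := by
    intro n
    have hsub : ball (0:E) ((2:ℝ)^n) ⊆ ball 0 ((2:ℝ)^(n+1)) :=
      ball_subset_ball (pow_le_pow_right₀ one_le_two (Nat.le_succ n))
    rw [hA_eq n, measure_diff hsub measurableSet_ball.nullMeasurableSet
      measure_ball_lt_top.ne,
      Measure.addHaar_ball _ _ (by positivity : (0:ℝ) ≤ (2:ℝ)^(n+1)),
      Measure.addHaar_ball _ _ (by positivity : (0:ℝ) ≤ (2:ℝ)^n),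
      finrank_euclideanSpace_fin]
    refine ENNReal.le_sub_of_add_le_left (ENNReal.mul_ne_top ENNReal.ofReal_ne_top measure_ball_lt_top.ne) ?_
    rw [← add_mul, ← ENNReal.ofReal_add (by positivity) (by positivity)]
    refine mul_le_mul_left (ENNReal.ofReal_le_ofReal ?_) _
    have h2d : (2:ℝ) ≤ 2 ^ (d:ℕ) := by
      calc (2:ℝ) = 2^1 := (pow_one 2).symm
      _ ≤ 2^(d:ℕ) := pow_le_pow_right₀ one_le_two hd
    have : ((2:ℝ)^(n+1))^(d:ℕ) = 2^(d:ℕ) * ((2:ℝ)^n)^(d:ℕ) := by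
      rw [pow_succ, mul_comm ((2:ℝ)^n) 2, mul_pow]
    rw [this]
    nlinarith [pow_pos (pow_pos (two_pos (α := ℝ)) n) (d:ℕ)]
  -- lower bound on annulus integral
  set ε : ℝ≥0∞ := ENNReal.ofReal ((2:ℝ) ^ (-|s|)) * volB with hε
  have hA_int : ∀ n, ε ≤ ∫⁻ y in A n, ENNReal.ofReal (‖y‖ ^ s) := by
    intro n
    have hlow : ∀ y ∈ A n, (2:ℝ)^((n:ℝ)*s - |s|) ≤ ‖y‖ ^ s := by
      intro y hy
      have h1 : (2:ℝ)^n ≤ ‖y‖ := hy.1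
      have h2 : ‖y‖ < (2:ℝ)^(n+1) := by simpa [hA, mem_ball_zero_iff] using hy.2
      have hy0 : (0:ℝ) < ‖y‖ := lt_of_lt_of_le (by positivity) h1
      rcases le_or_gt 0 s with h | h
      · calc (2:ℝ)^((n:ℝ)*s - |s|) ≤ (2:ℝ)^((n:ℝ)*s) :=
              Real.rpow_le_rpow_of_exponent_le one_le_two
                (by have := abs_nonneg s; linarith)
          _ = ((2:ℝ)^n) ^ s := pow_rpow_eq.symm
          _ ≤ ‖y‖ ^ s := Real.rpow_le_rpow (by positivity) h1 h
      · calc (2:ℝ)^((n:ℝ)*s - |s|) = ((2:ℝ)^(n+1)) ^ s := by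
              rw [abs_of_neg h, sub_neg_eq_add, pow_rpow_eq]
              push_cast
              ring_nf
          _ ≤ ‖y‖ ^ s := Real.rpow_le_rpow_of_nonpos hy0 h2.le h.le
    have hexp : (2:ℝ) ^ (-|s|) ≤ (2:ℝ)^((n:ℝ)*s - |s|) * ((2:ℝ)^n)^(d:ℕ) := by
      have e1 : ((2:ℝ)^n)^(d:ℕ) = (2:ℝ)^((n:ℝ)*(d:ℝ)) := by
        rw [← pow_mul, ← Real.rpow_natCast 2 (n*d)]
        push_cast; ring_nf
      rw [e1, ← Real.rpow_add two_pos]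
      refine Real.rpow_le_rpow_of_exponent_le one_le_two ?_
      have : 0 ≤ (n:ℝ) * (s + d) := mul_nonneg (Nat.cast_nonneg n) (by linarith)
      nlinarith
    calc ε ≤ ENNReal.ofReal ((2:ℝ)^((n:ℝ)*s - |s|) * ((2:ℝ)^n)^(d:ℕ)) * volB := by
          exact mul_le_mul_left (ENNReal.ofReal_le_ofReal hexp) _
      _ = ENNReal.ofReal ((2:ℝ)^((n:ℝ)*s - |s|)) * (ENNReal.ofReal (((2:ℝ)^n)^(d:ℕ)) * volB) := by
          rw [← mul_assoc, ← ENNReal.ofReal_mul (by positivity)]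
      _ ≤ ENNReal.ofReal ((2:ℝ)^((n:ℝ)*s - |s|)) * volume (A n) :=
          mul_le_mul_right (hA_vol n) _
      _ = ∫⁻ _ in A n, ENNReal.ofReal ((2:ℝ)^((n:ℝ)*s - |s|)) := (setLIntegral_const _ _).symm
      _ ≤ ∫⁻ y in A n, ENNReal.ofReal (‖y‖ ^ s) := by
          refine setLIntegral_mono ?_ (fun y hy => ENNReal.ofReal_le_ofReal (hlow y hy))
          fun_prop
  have hεne : ε ≠ 0 := by
    refine mul_ne_zero ?_ ?_
    · exact (ENNReal.ofReal_pos.2 (by positivity)).ne'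
    · exact (measure_ball_pos volume 0 one_pos).ne'
  have hsub2 : ⋃ k, A (N + k) ⊆ {y : E | R ≤ ‖y‖} := by
    intro y hy
    obtain ⟨k, hk⟩ := mem_iUnion.1 hy
    have : (2:ℝ)^N ≤ (2:ℝ)^(N+k) := pow_le_pow_right₀ one_le_two (Nat.le_add_right N k)
    exact le_trans hNR (le_trans this hk.1)
  have hdisjB : Pairwise (Function.onFun Disjoint (fun k => A (N + k))) := by
    intro i j hij
    rcases hij.lt_or_gt with h | h
    · exact hdisj' _ _ (by omega)
    · exact (hdisj' _ _ (by omega)).symm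
  refine top_le_iff.1 ?_
  calc (⊤ : ℝ≥0∞) = ∑' _ : ℕ, ε := (ENNReal.tsum_const_eq_top_of_ne_zero hεne).symm
    _ ≤ ∑' k, ∫⁻ y in A (N + k), ENNReal.ofReal (‖y‖ ^ s) :=
        ENNReal.tsum_le_tsum (fun k => hA_int (N + k))
    _ = ∫⁻ y in ⋃ k, A (N + k), ENNReal.ofReal (‖y‖ ^ s) :=
        (lintegral_iUnion (fun k => hmeas _) hdisjB _).symm
    _ ≤ ∫⁻ y in {y : E | R ≤ ‖y‖}, ENNReal.ofReal (‖y‖ ^ s) := lintegral_mono_set hsub2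

private lemma inv_pow_rpow_eq {n : ℕ} {s : ℝ} : (((2:ℝ) ^ n)⁻¹) ^ s = (2:ℝ) ^ (-(n:ℝ) * s) := by
  rw [← Real.rpow_natCast 2 n, ← Real.rpow_neg (by norm_num), ← Real.rpow_mul (by norm_num)]

private lemma L3 (d : ℕ) (hd : 0 < d) (t : ℝ) (ht : -(d:ℝ) < t) (ht0 : t ≤ 0) :
    ∫⁻ y in ball (0 : EuclideanSpace ℝ (Fin d)) 1, ENNReal.ofReal (‖y‖ ^ t) < ⊤ := by
  haveI : Nontrivial (EuclideanSpace ℝ (Fin d)) :=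
    Module.nontrivial_of_finrank_pos (R := ℝ) (by rw [finrank_euclideanSpace_fin]; exact hd)
  set E := EuclideanSpace ℝ (Fin d)
  set volC := volume (ball (0:E) 1) with hvolC
  set C : ℕ → Set E := fun n =>
    {y : E | ((2:ℝ)^(n+1))⁻¹ ≤ ‖y‖} ∩ closedBall 0 (((2:ℝ)^n)⁻¹) with hC
  set q : ℝ := (2:ℝ) ^ (-(t + (d:ℝ))) with hq
  have hq0 : 0 ≤ q := by positivity
  have hq1 : q < 1 :=
    Real.rpow_lt_one_of_one_lt_of_neg one_lt_two (by linarith)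
  have key : ∀ n : ℕ, ∫⁻ y in C n, ENNReal.ofReal (‖y‖ ^ t)
      ≤ ENNReal.ofReal ((2:ℝ)^(-t) * q ^ n) * volC := by
    intro n
    have h1 : ∫⁻ y in C n, ENNReal.ofReal (‖y‖ ^ t)
        ≤ ∫⁻ _ in C n, ENNReal.ofReal ((((2:ℝ)^(n+1))⁻¹) ^ t) := by
      refine setLIntegral_mono measurable_const (fun y hy => ENNReal.ofReal_le_ofReal ?_)
      exact Real.rpow_le_rpow_of_nonpos (by positivity) hy.1 ht0
    rw [setLIntegral_const] at h1
    have h2 : volume (C n) ≤ volume (closedBall (0:E) (((2:ℝ)^n)⁻¹)) :=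
      measure_mono inter_subset_right
    have h3 : volume (closedBall (0:E) (((2:ℝ)^n)⁻¹))
        = ENNReal.ofReal ((((2:ℝ)^n)⁻¹) ^ (d:ℕ)) * volC := by
      rw [Measure.addHaar_closedBall _ _ (by positivity : (0:ℝ) ≤ ((2:ℝ)^n)⁻¹),
        finrank_euclideanSpace_fin]
    have halg : (((2:ℝ)^(n+1))⁻¹) ^ t * (((2:ℝ)^n)⁻¹) ^ (d:ℕ) = (2:ℝ)^(-t) * q ^ n := by
      have e1 : (((2:ℝ)^(n+1))⁻¹) ^ t = (2:ℝ) ^ (-((n:ℝ)+1) * t) := by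
        rw [inv_pow_rpow_eq (n := n+1)]; push_cast; ring_nf
      have e2 : (((2:ℝ)^n)⁻¹) ^ (d:ℕ) = (2:ℝ) ^ (-(n:ℝ) * (d:ℝ)) := by
        have : (((2:ℝ)^n)⁻¹) ^ (d:ℕ) = (((2:ℝ)^n)⁻¹) ^ ((d:ℕ):ℝ) :=
          (Real.rpow_natCast _ d).symm
        rw [this, inv_pow_rpow_eq]
      have e3 : q ^ n = (2:ℝ) ^ ((n:ℝ) * (-(t + (d:ℝ)))) := by
        rw [hq, ← Real.rpow_natCast ((2:ℝ) ^ (-(t + (d:ℝ)))) n, ← Real.rpow_mul (by norm_num)]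
        ring_nf
      rw [e1, e2, e3, ← Real.rpow_add two_pos, ← Real.rpow_add two_pos]
      ring_nf
    calc ∫⁻ y in C n, ENNReal.ofReal (‖y‖ ^ t)
        ≤ ENNReal.ofReal ((((2:ℝ)^(n+1))⁻¹) ^ t) * volume (C n) := h1
      _ ≤ ENNReal.ofReal ((((2:ℝ)^(n+1))⁻¹) ^ t)
            * (ENNReal.ofReal ((((2:ℝ)^n)⁻¹) ^ (d:ℕ)) * volC) := by
          rw [← h3]; exact mul_le_mul_right h2 _
      _ = ENNReal.ofReal ((2:ℝ)^(-t) * q ^ n) * volC := by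
          rw [← mul_assoc, ← ENNReal.ofReal_mul (by positivity), halg]
  have hsub : ball (0:E) 1 ⊆ {0} ∪ ⋃ n, C n := by
    intro y hy
    rcases eq_or_ne y 0 with rfl | hy0
    · exact Or.inl rfl
    refine Or.inr ?_
    have hy0' : (0:ℝ) < ‖y‖ := norm_pos_iff.2 hy0
    have hy1 : ‖y‖ < 1 := mem_ball_zero_iff.1 hy
    have hinv : 1 ≤ ‖y‖⁻¹ := by
      have h := mul_inv_cancel₀ hy0'.ne'
      have : 0 < ‖y‖⁻¹ := by positivity
      nlinarith
    obtain ⟨n, hn1, hn2⟩ := exists_pow2 hinv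
    refine mem_iUnion.2 ⟨n, ?_, ?_⟩
    · exact inv_le_of_inv_le₀ hy0' hn2.le
    · exact mem_closedBall_zero_iff.2 (le_inv_of_le_inv₀ (by positivity) hn1)
  calc ∫⁻ y in ball (0:E) 1, ENNReal.ofReal (‖y‖ ^ t)
      ≤ ∫⁻ y in ({0} ∪ ⋃ n, C n : Set E), ENNReal.ofReal (‖y‖ ^ t) := lintegral_mono_set hsub
    _ ≤ (∫⁻ y in ({0} : Set E), ENNReal.ofReal (‖y‖ ^ t))
        + ∫⁻ y in ⋃ n, C n, ENNReal.ofReal (‖y‖ ^ t) := lintegral_union_le _ _ _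
    _ = ∫⁻ y in ⋃ n, C n, ENNReal.ofReal (‖y‖ ^ t) := by
        rw [setLIntegral_measure_zero _ _ (measure_singleton 0), zero_add]
    _ ≤ ∑' n, ∫⁻ y in C n, ENNReal.ofReal (‖y‖ ^ t) := lintegral_iUnion_le _ _
    _ ≤ ∑' n : ℕ, ENNReal.ofReal ((2:ℝ)^(-t) * q ^ n) * volC := ENNReal.tsum_le_tsum key
    _ = ENNReal.ofReal ((2:ℝ)^(-t)) * ((∑' n : ℕ, ENNReal.ofReal (q ^ n)) * volC) := by
        simp_rw [ENNReal.ofReal_mul (by positivity : (0:ℝ) ≤ (2:ℝ)^(-t)), mul_assoc,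
          ENNReal.tsum_mul_left, ENNReal.tsum_mul_right]
    _ < ⊤ := ENNReal.mul_lt_top ENNReal.ofReal_lt_top
        (ENNReal.mul_lt_top (geom_tsum_lt_top hq0 hq1) measure_ball_lt_top)

theorem stmt_13 (d : ℕ) (hd : 1 ≤ d) (α : ℝ) (hα : α ∈ Set.Ioc (0 : ℝ) 2) (hαd : α < d)
    (γ c : ℝ) (hc : 0 < c) :
    (c < γ - α ↔ ∀ x : EuclideanSpace ℝ (Fin d),
      (∫⁻ y in {y : EuclideanSpace ℝ (Fin d) | 1 ≤ ‖y‖},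
        ENNReal.ofReal (‖x - y‖ ^ (α - (d : ℝ)) * (‖y‖ ^ (-γ) * (‖y‖ ^ c - 1)))) < ⊤) ∧
    ((∀ x : EuclideanSpace ℝ (Fin d),
      (∫⁻ y in {y : EuclideanSpace ℝ (Fin d) | 1 ≤ ‖y‖},
        ENNReal.ofReal (‖x - y‖ ^ (α - (d : ℝ)) * (‖y‖ ^ (-γ) * (‖y‖ ^ c - 1)))) < ⊤) ↔
     (∃ x : EuclideanSpace ℝ (Fin d),
      (∫⁻ y in {y : EuclideanSpace ℝ (Fin d) | 1 ≤ ‖y‖},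
        ENNReal.ofReal (‖x - y‖ ^ (α - (d : ℝ)) * (‖y‖ ^ (-γ) * (‖y‖ ^ c - 1)))) < ⊤)) := by
  have hd0 : 0 < d := hd
  have hd0' : (0:ℝ) < d := by exact_mod_cast hd0
  obtain ⟨hα0, hα2⟩ := hα
  set t : ℝ := α - (d:ℝ) with htdef
  have htneg : t < 0 := by simp only [htdef]; linarith
  have htgt : -(d:ℝ) < t := by simp only [htdef]; linarith
  set E := EuclideanSpace ℝ (Fin d)
  set S : Set E := {y : E | 1 ≤ ‖y‖} with hS
  set F : E → E → ℝ≥0∞ := fun x y =>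
    ENNReal.ofReal (‖x - y‖ ^ t * (‖y‖ ^ (-γ) * (‖y‖ ^ c - 1))) with hF
  have hFmeas : ∀ x, Measurable (F x) := by intro x; simp only [hF]; fun_prop
  -- KEY 1 : c < γ - α → all integrals finite
  have key1 : c < γ - α → ∀ x : E, ∫⁻ y in S, F x y < ⊤ := by
    intro hlt x
    set R : ℝ := 2 * ‖x‖ + 2 with hRdef
    have hxnn := norm_nonneg x
    have hR2 : (2:ℝ) ≤ R := by simp only [hRdef]; linarith
    have hR1 : (1:ℝ) ≤ R := by linarith
    set s₂ : ℝ := t + (c - γ) with hs₂def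
    have hs₂ : s₂ < -(d:ℝ) := by simp only [hs₂def, htdef]; linarith
    set S₁ : Set E := S ∩ closedBall 0 R with hS₁
    set S₂ : Set E := {y : E | R ≤ ‖y‖} with hS₂
    have hcover : S ⊆ S₁ ∪ S₂ := by
      intro y hy
      rcases le_total ‖y‖ R with h | h
      · exact Or.inl ⟨hy, mem_closedBall_zero_iff.2 h⟩
      · exact Or.inr h
    -- far part
    have hfar : ∫⁻ y in S₂, F x y < ⊤ := by
      have hbound : ∀ y ∈ S₂, F x y
          ≤ ENNReal.ofReal ((2:ℝ) ^ (-t)) * ENNReal.ofReal (‖y‖ ^ s₂) := by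
        intro y hy
        have hyR : R ≤ ‖y‖ := hy
        have hy0 : (0:ℝ) < ‖y‖ := by linarith
        have hy1 : (1:ℝ) ≤ ‖y‖ := by linarith
        have hxy : ‖y‖ / 2 ≤ ‖x - y‖ := by
          have h1 : ‖y‖ - ‖x‖ ≤ ‖y - x‖ := norm_sub_norm_le y x
          rw [norm_sub_rev] at h1
          have : ‖x‖ ≤ ‖y‖ / 2 := by simp only [hRdef] at hyR; linarith
          linarith
        have e1 : ‖x - y‖ ^ t ≤ ‖y‖ ^ t * (2:ℝ) ^ (-t) := by
          have h2 : ‖x - y‖ ^ t ≤ (‖y‖ / 2) ^ t :=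
            Real.rpow_le_rpow_of_nonpos (by positivity) hxy htneg.le
          have h3 : (‖y‖ / 2) ^ t = ‖y‖ ^ t * (2:ℝ) ^ (-t) := by
            rw [div_eq_mul_inv, Real.mul_rpow (norm_nonneg y) (by positivity),
              Real.inv_rpow (by norm_num : (0:ℝ) ≤ 2), ← Real.rpow_neg (by norm_num)]
          linarith
        have e2 : ‖y‖ ^ (-γ) * (‖y‖ ^ c - 1) ≤ ‖y‖ ^ (-γ + c) := by
          rw [Real.rpow_add hy0]
          have : ‖y‖ ^ c - 1 ≤ ‖y‖ ^ c := by linarith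
          exact mul_le_mul_of_nonneg_left this (Real.rpow_nonneg (norm_nonneg y) _)
        have e3 : ‖x - y‖ ^ t * (‖y‖ ^ (-γ) * (‖y‖ ^ c - 1))
            ≤ (2:ℝ) ^ (-t) * ‖y‖ ^ s₂ := by
          have hb0 : 0 ≤ ‖y‖ ^ (-γ) * (‖y‖ ^ c - 1) := by
            have : (1:ℝ) ≤ ‖y‖ ^ c := Real.one_le_rpow hy1 hc.le
            have := Real.rpow_nonneg (norm_nonneg y) (-γ)
            nlinarith
          have step := mul_le_mul e1 e2 hb0 (by positivity)
          have hsplit : ‖y‖ ^ s₂ = ‖y‖ ^ t * ‖y‖ ^ (-γ + c) := by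
            rw [show s₂ = t + (-γ + c) by rw [hs₂def]; ring, Real.rpow_add hy0]
          calc ‖x - y‖ ^ t * (‖y‖ ^ (-γ) * (‖y‖ ^ c - 1))
              ≤ ‖y‖ ^ t * (2:ℝ) ^ (-t) * ‖y‖ ^ (-γ + c) := step
            _ = (2:ℝ) ^ (-t) * ‖y‖ ^ s₂ := by rw [hsplit]; ring
        calc F x y ≤ ENNReal.ofReal ((2:ℝ) ^ (-t) * ‖y‖ ^ s₂) := ENNReal.ofReal_le_ofReal e3
          _ = ENNReal.ofReal ((2:ℝ) ^ (-t)) * ENNReal.ofReal (‖y‖ ^ s₂) :=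
              ENNReal.ofReal_mul (by positivity)
      calc ∫⁻ y in S₂, F x y
          ≤ ∫⁻ y in S₂, ENNReal.ofReal ((2:ℝ) ^ (-t)) * ENNReal.ofReal (‖y‖ ^ s₂) := by
            refine setLIntegral_mono (by fun_prop) hbound
        _ = ENNReal.ofReal ((2:ℝ) ^ (-t)) * ∫⁻ y in S₂, ENNReal.ofReal (‖y‖ ^ s₂) :=
            lintegral_const_mul' _ _ ENNReal.ofReal_ne_top
        _ ≤ ENNReal.ofReal ((2:ℝ) ^ (-t)) * ∫⁻ y in S, ENNReal.ofReal (‖y‖ ^ s₂) := by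
            refine mul_le_mul_right (lintegral_mono_set ?_) _
            intro y hy; exact le_trans hR1 hy
        _ < ⊤ := ENNReal.mul_lt_top ENNReal.ofReal_lt_top (L1 d hd0 s₂ hs₂)
    -- near part
    have hnear : ∫⁻ y in S₁, F x y < ⊤ := by
      set M : ℝ := (1 + R ^ (-γ)) * R ^ c with hM
      have hM0 : 0 ≤ M := by positivity
      have hbound : ∀ y ∈ S₁, F x y
          ≤ ENNReal.ofReal M * ENNReal.ofReal (‖x - y‖ ^ t) := by
        intro y hy
        have hy1 : (1:ℝ) ≤ ‖y‖ := hy.1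
        have hyR : ‖y‖ ≤ R := mem_closedBall_zero_iff.1 hy.2
        have hg : ‖y‖ ^ (-γ) * (‖y‖ ^ c - 1) ≤ M := by
          have h1 : ‖y‖ ^ (-γ) ≤ 1 + R ^ (-γ) := by
            rcases le_or_gt (-γ) 0 with h | h
            · have h1a := Real.rpow_le_one_of_one_le_of_nonpos hy1 h
              have h1b : (0:ℝ) < R ^ (-γ) := by positivity
              linarith
            · have h1a := Real.rpow_le_rpow (norm_nonneg y) hyR h.le
              linarith
          have h2 : ‖y‖ ^ c - 1 ≤ R ^ c := by
            have h2a := Real.rpow_le_rpow (norm_nonneg y) hyR hc.le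
            linarith
          have hb0 : 0 ≤ ‖y‖ ^ c - 1 := by
            have hb1 : (1:ℝ) ≤ ‖y‖ ^ c := Real.one_le_rpow hy1 hc.le
            linarith
          exact mul_le_mul h1 h2 hb0 (by positivity)
        calc F x y ≤ ENNReal.ofReal (‖x - y‖ ^ t * M) := by
              refine ENNReal.ofReal_le_ofReal ?_
              exact mul_le_mul_of_nonneg_left hg (Real.rpow_nonneg (norm_nonneg _) _)
          _ = ENNReal.ofReal M * ENNReal.ofReal (‖x - y‖ ^ t) := by
              rw [mul_comm, ENNReal.ofReal_mul hM0]
      set r' : ℝ := R + ‖x‖ + 1 with hr'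
      have hS₁sub : S₁ ⊆ ball x r' := by
        intro y hy
        have hyR : ‖y‖ ≤ R := mem_closedBall_zero_iff.1 hy.2
        have : ‖y - x‖ ≤ ‖y‖ + ‖x‖ := norm_sub_le y x
        rw [mem_ball, dist_eq_norm]
        simp only [hr']
        linarith
      have hchange : ∫⁻ y in ball x r', ENNReal.ofReal (‖x - y‖ ^ t)
          = ∫⁻ z in ball (0:E) r', ENNReal.ofReal (‖z‖ ^ t) := by
        have hpre : ball x r' = (fun y : E => x - y) ⁻¹' ball (0:E) r' := by
          ext y
          simp only [mem_preimage, mem_ball, dist_eq_norm, sub_zero, dist_eq_norm]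
          rw [dist_zero_right, dist_comm, dist_eq_norm]
        rw [hpre]
        exact (Measure.measurePreserving_sub_left volume x).setLIntegral_comp_preimage_emb
          (MeasurableEquiv.subLeft x).measurableEmbedding
          (fun z => ENNReal.ofReal (‖z‖ ^ t)) (ball 0 r')
      have hball : ∫⁻ z in ball (0:E) r', ENNReal.ofReal (‖z‖ ^ t) < ⊤ := by
        have hsplit : ball (0:E) r' ⊆ ball (0:E) 1 ∪ (S ∩ closedBall (0:E) r') := by
          intro z hz
          rcases lt_or_ge ‖z‖ 1 with h | h
          · exact Or.inl (mem_ball_zero_iff.2 h)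
          · exact Or.inr ⟨h, mem_closedBall_zero_iff.2 (le_of_lt (mem_ball_zero_iff.1 hz))⟩
        calc ∫⁻ z in ball (0:E) r', ENNReal.ofReal (‖z‖ ^ t)
            ≤ ∫⁻ z in (ball (0:E) 1 ∪ (S ∩ closedBall (0:E) r') : Set E),
              ENNReal.ofReal (‖z‖ ^ t) := lintegral_mono_set hsplit
          _ ≤ (∫⁻ z in ball (0:E) 1, ENNReal.ofReal (‖z‖ ^ t))
              + ∫⁻ z in S ∩ closedBall (0:E) r', ENNReal.ofReal (‖z‖ ^ t) :=
              lintegral_union_le _ _ _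
          _ ≤ (∫⁻ z in ball (0:E) 1, ENNReal.ofReal (‖z‖ ^ t))
              + ∫⁻ _ in S ∩ closedBall (0:E) r', (1:ℝ≥0∞) := by
              refine add_le_add_right (setLIntegral_mono measurable_const ?_) _
              intro z hz
              simpa using ENNReal.ofReal_le_ofReal
                (Real.rpow_le_one_of_one_le_of_nonpos hz.1 htneg.le)
          _ < ⊤ := by
              refine ENNReal.add_lt_top.2 ⟨L3 d hd0 t htgt htneg.le, ?_⟩
              rw [setLIntegral_one]
              exact lt_of_le_of_lt (measure_mono inter_subset_right) measure_closedBall_lt_top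
      calc ∫⁻ y in S₁, F x y
          ≤ ∫⁻ y in S₁, ENNReal.ofReal M * ENNReal.ofReal (‖x - y‖ ^ t) :=
            setLIntegral_mono (by fun_prop) hbound
        _ ≤ ∫⁻ y in ball x r', ENNReal.ofReal M * ENNReal.ofReal (‖x - y‖ ^ t) :=
            lintegral_mono_set hS₁sub
        _ = ENNReal.ofReal M * ∫⁻ y in ball x r', ENNReal.ofReal (‖x - y‖ ^ t) :=
            lintegral_const_mul' _ _ ENNReal.ofReal_ne_top
        _ < ⊤ := by
            rw [hchange]
            exact ENNReal.mul_lt_top ENNReal.ofReal_lt_top hball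
    calc ∫⁻ y in S, F x y ≤ ∫⁻ y in (S₁ ∪ S₂ : Set E), F x y := lintegral_mono_set hcover
      _ ≤ (∫⁻ y in S₁, F x y) + ∫⁻ y in S₂, F x y := lintegral_union_le _ _ _
      _ < ⊤ := ENNReal.add_lt_top.2 ⟨hnear, hfar⟩
  -- KEY 2 : some integral finite → c < γ - α
  have key2 : (∃ x : E, ∫⁻ y in S, F x y < ⊤) → c < γ - α := by
    rintro ⟨x, hx⟩
    by_contra hcon
    push_neg at hcon
    set s : ℝ := t + (c - γ) with hsdef
    have hs : -(d:ℝ) ≤ s := by simp only [hsdef, htdef]; linarith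
    set R : ℝ := max ((2:ℝ) ^ (1/c)) (2 * ‖x‖ + 2) with hRdef
    have hxnn := norm_nonneg x
    have hR2 : (2:ℝ) ≤ R := le_trans (by linarith) (le_max_right _ _)
    have hR1 : (1:ℝ) ≤ R := by linarith
    have hRc : (2:ℝ) ^ (1/c) ≤ R := le_max_left _ _
    have hRx : 2 * ‖x‖ + 2 ≤ R := le_max_right _ _
    have hlow : ∀ y ∈ {y : E | R ≤ ‖y‖}, ENNReal.ofReal ((2:ℝ) ^ (t - 1) * ‖y‖ ^ s)
        ≤ F x y := by
      intro y hy
      have hyR : R ≤ ‖y‖ := hy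
      have hy0 : (0:ℝ) < ‖y‖ := by linarith
      have hxley : ‖x‖ ≤ ‖y‖ / 2 - 1 := by
        have := le_trans hRx hyR; linarith
      have hxy0 : (0:ℝ) < ‖x - y‖ := by
        have h1 : ‖y‖ - ‖x‖ ≤ ‖y - x‖ := norm_sub_norm_le y x
        rw [norm_sub_rev] at h1
        linarith
      have hxy2 : ‖x - y‖ ≤ 2 * ‖y‖ := by
        have := norm_sub_le x y
        linarith
      have e1 : (2:ℝ) ^ t * ‖y‖ ^ t ≤ ‖x - y‖ ^ t := by
        have h2 : (2 * ‖y‖) ^ t ≤ ‖x - y‖ ^ t :=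
          Real.rpow_le_rpow_of_nonpos hxy0 hxy2 htneg.le
        rwa [Real.mul_rpow (by norm_num) (norm_nonneg y)] at h2
      have e2 : (2:ℝ) ≤ ‖y‖ ^ c := by
        have h3 : ((2:ℝ) ^ (1/c)) ^ c ≤ ‖y‖ ^ c :=
          Real.rpow_le_rpow (by positivity) (le_trans hRc hyR) hc.le
        rwa [← Real.rpow_mul (by norm_num), one_div_mul_cancel hc.ne', Real.rpow_one] at h3
      have e3 : ‖y‖ ^ c / 2 ≤ ‖y‖ ^ c - 1 := by linarith
      refine ENNReal.ofReal_le_ofReal ?_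
      have hexp : (2:ℝ) ^ (t - 1) * ‖y‖ ^ s
          = ((2:ℝ) ^ t * ‖y‖ ^ t) * (‖y‖ ^ (-γ) * (‖y‖ ^ c / 2)) := by
        rw [hsdef, show t + (c - γ) = t + -γ + c by ring, Real.rpow_add hy0,
          Real.rpow_add hy0, Real.rpow_sub (by norm_num : (0:ℝ) < 2), Real.rpow_one]
        ring
      rw [hexp]
      refine mul_le_mul e1 ?_ (by positivity) (Real.rpow_nonneg hxy0.le t)
      exact mul_le_mul_of_nonneg_left e3 (Real.rpow_nonneg (norm_nonneg y) _)
    have hdiv : ∫⁻ y in {y : E | R ≤ ‖y‖}, ENNReal.ofReal ((2:ℝ) ^ (t - 1) * ‖y‖ ^ s) = ⊤ := by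
      have : ∀ y : E, ENNReal.ofReal ((2:ℝ) ^ (t - 1) * ‖y‖ ^ s)
          = ENNReal.ofReal ((2:ℝ) ^ (t - 1)) * ENNReal.ofReal (‖y‖ ^ s) := fun y =>
        ENNReal.ofReal_mul (by positivity)
      simp_rw [this]
      rw [lintegral_const_mul' _ _ ENNReal.ofReal_ne_top, L2 d hd0 s hs R]
      exact ENNReal.mul_top (ENNReal.ofReal_pos.2 (by positivity)).ne'
    have : (⊤:ℝ≥0∞) ≤ ∫⁻ y in S, F x y := by
      calc (⊤:ℝ≥0∞) = ∫⁻ y in {y : E | R ≤ ‖y‖},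
            ENNReal.ofReal ((2:ℝ) ^ (t - 1) * ‖y‖ ^ s) := hdiv.symm
        _ ≤ ∫⁻ y in {y : E | R ≤ ‖y‖}, F x y := setLIntegral_mono (hFmeas x) hlow
        _ ≤ ∫⁻ y in S, F x y := lintegral_mono_set (fun y hy => le_trans hR1 hy)
    exact absurd hx (by simp [top_le_iff.1 this])
  refine ⟨⟨key1, fun h => key2 ⟨0, h 0⟩⟩, ⟨fun h => ⟨0, h 0⟩, fun h => key1 (key2 h)⟩⟩
end
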